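/- arXiv:2110.13757 — 4 statements merged into one kernel-verified Lean document; each statement's English description precedes it below -/
import Mathlib

section
/- Suppose Ω ⊂ ℝⁿ is a bounded open set, G satisfies the Hölder condition with exponent α ∈ ((n−1)/n, 1] and constant C_α, and W ∈ F_w(Ω) minimizes J_w = F_w + G on F_w(Ω). Set γ = αn − (n−1) > 0. Then W is a local almost minimizer of F_w with gauge h(r) = C_γ r^γ, where C_γ depends only on n, α, C_α: for every ball B(x,r) ⊂ Ω with r ≤ 1 and every X ∈ F_w(Ω) that coincides with W outside B(x,r) (up to Lebesgue-null sets), F_w(W) ≤ F_w(X) + C_γ r^γ r^{n−1}. -/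
open MeasureTheory Metric Set Filter
open scoped ENNReal symmDiff

noncomputable section

/-- The Lebesgue density of `W` at `x` equals `d`. -/
def densTo {n : ℕ} (W : Set (EuclideanSpace ℝ (Fin n)))
    (x : EuclideanSpace ℝ (Fin n)) (d : ℝ) : Prop :=
  Tendsto (fun r : ℝ =>
      (volume (W ∩ ball x r)).toReal / (volume (ball x r)).toReal)
    (nhdsWithin 0 (Ioi 0)) (nhds d)

/-- The (measure-theoretic) reduced boundary `∂*W` of `W` inside `Ω`:
points of `Ω` where `W` has neither density `0` nor density `1`. -/
def redBdry {n : ℕ} (Ω W : Set (EuclideanSpace ℝ (Fin n))) :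
    Set (EuclideanSpace ℝ (Fin n)) :=
  {x | x ∈ Ω ∧ ¬ densTo W x 0 ∧ ¬ densTo W x 1}

/-- The perimeter measure `μ_W = |D1_W| = H^{n-1} ⌊ ∂*W`. -/
def perMeas {n : ℕ} (Ω W : Set (EuclideanSpace ℝ (Fin n))) :
    Measure (EuclideanSpace ℝ (Fin n)) :=
  (μH[(n : ℝ) - 1]).restrict (redBdry Ω W)

/-- `W` has locally finite perimeter in `Ω`. -/
def HasLocFinPer {n : ℕ} (Ω W : Set (EuclideanSpace ℝ (Fin n))) : Prop :=
  ∀ K : Set (EuclideanSpace ℝ (Fin n)), IsCompact K → K ⊆ Ω → perMeas Ω W K < ⊤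

/-- The class `F_w(Ω)` of weak partitions of `Ω` into `N` Borel sets of
locally finite perimeter, covering a.e. point of `Ω` exactly once. -/
def FwClass {n : ℕ} (Ω : Set (EuclideanSpace ℝ (Fin n))) {N : ℕ}
    (W : Fin N → Set (EuclideanSpace ℝ (Fin n))) : Prop :=
  (∀ i, W i ⊆ Ω) ∧ (∀ i, MeasurableSet (W i)) ∧ (∀ i, HasLocFinPer Ω (W i)) ∧
    (∀ᵐ x ∂(volume.restrict Ω), ∃! i, x ∈ W i)

/-- The total reduced boundary `∂*(W) = ⋃ i ∂*W_i`. -/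
def totBdry {n : ℕ} (Ω : Set (EuclideanSpace ℝ (Fin n))) {N : ℕ}
    (W : Fin N → Set (EuclideanSpace ℝ (Fin n))) : Set (EuclideanSpace ℝ (Fin n)) :=
  ⋃ i, redBdry Ω (W i)

/-- The weak surface functional `F_w(W) = Σ_i ∫_Ω a dμ_{W_i}`. -/
def Fw {n : ℕ} (Ω : Set (EuclideanSpace ℝ (Fin n)))
    (a : EuclideanSpace ℝ (Fin n) → ℝ) {N : ℕ}
    (W : Fin N → Set (EuclideanSpace ℝ (Fin n))) : ℝ≥0∞ :=
  ∑ i, ∫⁻ x, ENNReal.ofReal (a x) ∂(perMeas Ω (W i))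

/-- The `L¹` distance `dist(W,W') = Σ_i |W_i Δ W'_i|` between tuples. -/
def distW {n N : ℕ} (W W' : Fin N → Set (EuclideanSpace ℝ (Fin n))) : ℝ≥0∞ :=
  ∑ i, volume (W i ∆ W' i)

/-- The weak functional `J_w = F_w + G`, with values in `EReal`
(since `F_w` may be infinite and `G` is real-valued). -/
def Jw {n : ℕ} (Ω : Set (EuclideanSpace ℝ (Fin n)))
    (a : EuclideanSpace ℝ (Fin n) → ℝ) {N : ℕ}
    (G : (Fin N → Set (EuclideanSpace ℝ (Fin n))) → ℝ)
    (W : Fin N → Set (EuclideanSpace ℝ (Fin n))) : EReal :=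
  (Fw Ω a W : EReal) + (G W : EReal)

/-- The Hölder condition on `G`: `|G(W) - G(W')| ≤ C_α dist(W,W')^α`. -/
def HolderG {n : ℕ} (Ω : Set (EuclideanSpace ℝ (Fin n))) {N : ℕ}
    (G : (Fin N → Set (EuclideanSpace ℝ (Fin n))) → ℝ) (α Cα : ℝ) : Prop :=
  ∀ W W' : Fin N → Set (EuclideanSpace ℝ (Fin n)), FwClass Ω W → FwClass Ω W' →
    |G W - G W'| ≤ Cα * (distW W W').toReal ^ α

/-- `W` minimizes `J_w` on `F_w(Ω)`. -/
def MinJw {n : ℕ} (Ω : Set (EuclideanSpace ℝ (Fin n)))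
    (a : EuclideanSpace ℝ (Fin n) → ℝ) {N : ℕ}
    (G : (Fin N → Set (EuclideanSpace ℝ (Fin n))) → ℝ)
    (W : Fin N → Set (EuclideanSpace ℝ (Fin n))) : Prop :=
  FwClass Ω W ∧ ∀ X : Fin N → Set (EuclideanSpace ℝ (Fin n)),
    FwClass Ω X → Jw Ω a G W ≤ Jw Ω a G X



lemma coe_ennreal_eq_coe_toReal {x : ℝ≥0∞} (hx : x ≠ ⊤) :
    (x : EReal) = ((x.toReal : ℝ) : EReal) := by
  rw [← EReal.coe_toReal (fun h => hx (EReal.coe_ennreal_eq_top_iff.mp h))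
    (EReal.coe_ennreal_ne_bot x), EReal.toReal_coe_ennreal]

lemma distW_le_two_vol {n N : ℕ} {Ω : Set (EuclideanSpace ℝ (Fin n))}
    (hΩ : MeasurableSet Ω)
    {W X : Fin N → Set (EuclideanSpace ℝ (Fin n))}
    (hW : FwClass Ω W) (hX : FwClass Ω X)
    {B : Set (EuclideanSpace ℝ (Fin n))} (hB : MeasurableSet B) (hBΩ : B ⊆ Ω)
    (hnull : ∀ i, volume ((W i ∆ X i) \ B) = 0) :
    distW W X ≤ 2 * volume B := by
  have hmW := hW.2.1
  have hmX := hX.2.1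
  have hS : ∀ i, MeasurableSet ((W i ∆ X i) ∩ B) := fun i =>
    ((hmW i).symmDiff (hmX i)).inter hB
  have step1 : distW W X ≤ ∑ i, volume ((W i ∆ X i) ∩ B) := by
    apply Finset.sum_le_sum
    intro i _
    calc volume (W i ∆ X i)
        ≤ volume ((W i ∆ X i) ∩ B) + volume ((W i ∆ X i) \ B) :=
          measure_le_inter_add_diff _ _ _
      _ = volume ((W i ∆ X i) ∩ B) := by rw [hnull i, add_zero]
  refine step1.trans ?_
  have step2 : ∑ i, volume ((W i ∆ X i) ∩ B)
      = ∫⁻ y, ∑ i, ((W i ∆ X i) ∩ B).indicator (fun _ => (1 : ℝ≥0∞)) y := by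
    rw [lintegral_finset_sum]
    · simp_rw [lintegral_indicator_const (hS _)]
      simp
    · intro i _
      exact (measurable_const.indicator (hS i))
  rw [step2]
  have h1 : ∀ᵐ y ∂(volume : Measure (EuclideanSpace ℝ (Fin n))),
      y ∈ Ω → ∃! i, y ∈ W i := (ae_restrict_iff' hΩ).mp hW.2.2.2
  have h2 : ∀ᵐ y ∂(volume : Measure (EuclideanSpace ℝ (Fin n))),
      y ∈ Ω → ∃! i, y ∈ X i := (ae_restrict_iff' hΩ).mp hX.2.2.2
  have step3 : ∫⁻ y, ∑ i, ((W i ∆ X i) ∩ B).indicator (fun _ => (1 : ℝ≥0∞)) y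
      ≤ ∫⁻ y, B.indicator (fun _ => (2 : ℝ≥0∞)) y := by
    refine lintegral_mono_ae ?_
    filter_upwards [h1, h2] with y hy1 hy2
    by_cases hyB : y ∈ B
    · obtain ⟨i0, hi0, hi0u⟩ := hy1 (hBΩ hyB)
      obtain ⟨j0, hj0, hj0u⟩ := hy2 (hBΩ hyB)
      have key : ∀ i, y ∈ W i ∆ X i → i = i0 ∨ i = j0 := by
        intro i hi
        rcases hi with h | h
        · exact Or.inl (hi0u i h.1)
        · exact Or.inr (hj0u i h.1)
      have hz : ∀ i ∉ ({i0, j0} : Finset (Fin N)),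
          ((W i ∆ X i) ∩ B).indicator (fun _ => (1 : ℝ≥0∞)) y = 0 := by
        intro i hi
        apply Set.indicator_of_notMem
        rintro ⟨hSi, -⟩
        rcases key i hSi with rfl | rfl <;> simp at hi
      calc ∑ i, ((W i ∆ X i) ∩ B).indicator (fun _ => (1 : ℝ≥0∞)) y
          = ∑ i ∈ ({i0, j0} : Finset (Fin N)),
              ((W i ∆ X i) ∩ B).indicator (fun _ => (1 : ℝ≥0∞)) y :=
            (Finset.sum_subset (Finset.subset_univ _) (fun i _ hi => hz i hi)).symm
        _ ≤ ∑ _i ∈ ({i0, j0} : Finset (Fin N)), (1 : ℝ≥0∞) := by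
            refine Finset.sum_le_sum fun i _ => ?_
            classical
            rw [Set.indicator_apply]
            split <;> simp
        _ ≤ 2 := by
            rw [Finset.sum_const, nsmul_eq_mul, mul_one]
            have := Finset.card_insert_le i0 ({j0} : Finset (Fin N))
            simp only [Finset.card_singleton] at this
            exact_mod_cast Nat.cast_le.mpr this
        _ = B.indicator (fun _ => (2 : ℝ≥0∞)) y := by
            rw [Set.indicator_of_mem hyB]
    · have : ∀ i, ((W i ∆ X i) ∩ B).indicator (fun _ => (1 : ℝ≥0∞)) y = 0 := by
        intro i
        exact Set.indicator_of_notMem (fun h => hyB h.2) _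
      simp [this, Set.indicator_of_notMem hyB]
  refine step3.trans ?_
  rw [lintegral_indicator_const hB]

/-- local almost minimality, Definition 4.3 and (4.18):
if `Ω` is bounded and open, `G` is `α`-Hölder with constant `C_α` for some
`α ∈ ((n-1)/n, 1]`, and `W` minimizes `J_w = F_w + G` on `F_w(Ω)`, then `W`
is a local almost minimizer of `F_w` with gauge `h(r) = C_γ r^γ`,
`γ = αn - (n-1)`, where `C_γ` depends only on `n`, `α`, `C_α`. -/
theorem stmt3 (n : ℕ) (α Cα : ℝ)
    (hα₁ : ((n : ℝ) - 1) / n < α) (hα₂ : α ≤ 1) (hCα : 0 ≤ Cα) :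
    ∃ Cγ : ℝ, 0 ≤ Cγ ∧
      ∀ (N : ℕ), 1 ≤ N →
      ∀ (Ω : Set (EuclideanSpace ℝ (Fin n))), IsOpen Ω → Bornology.IsBounded Ω →
      ∀ (a : EuclideanSpace ℝ (Fin n) → ℝ), (∀ x ∈ Ω, 0 < a x) →
      ∀ (G : (Fin N → Set (EuclideanSpace ℝ (Fin n))) → ℝ), HolderG Ω G α Cα →
      ∀ (W : Fin N → Set (EuclideanSpace ℝ (Fin n))), MinJw Ω a G W →
      ∀ (x : EuclideanSpace ℝ (Fin n)) (r : ℝ), 0 < r → r ≤ 1 → ball x r ⊆ Ω →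
      ∀ (X : Fin N → Set (EuclideanSpace ℝ (Fin n))), FwClass Ω X →
        (∀ i, volume ((W i ∆ X i) \ ball x r) = 0) →
        Fw Ω a W ≤ Fw Ω a X
          + ENNReal.ofReal (Cγ * r ^ (α * n - ((n : ℝ) - 1)) * r ^ ((n : ℝ) - 1)) := by
  -- positivity of α
  have hα0 : 0 < α := by
    refine lt_of_le_of_lt ?_ hα₁
    rcases Nat.eq_zero_or_pos n with h | h
    · simp [h]
    · apply div_nonneg
      · have : (1 : ℝ) ≤ (n : ℝ) := by exact_mod_cast h
        linarith
      · positivity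
  set κ : ℝ := (volume (ball (0 : EuclideanSpace ℝ (Fin n)) 1)).toReal with hκ
  have hκ0 : 0 ≤ κ := ENNReal.toReal_nonneg
  refine ⟨Cα * (2 * κ) ^ α, by positivity, ?_⟩
  intro N hN Ω hΩo hΩb a ha G hG W hMin x r hr hr1 hball X hXcl hXnull
  obtain ⟨hWcl, hWmin⟩ := hMin
  -- rewrite the gauge
  have hgauge : Cα * (2 * κ) ^ α * r ^ (α * n - ((n : ℝ) - 1)) * r ^ ((n : ℝ) - 1)
      = Cα * (2 * κ) ^ α * r ^ (α * n) := by
    rw [mul_assoc, ← Real.rpow_add hr, sub_add_cancel]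
  rw [hgauge]
  set E : ℝ := Cα * (2 * κ) ^ α * r ^ (α * n) with hE
  have hE0 : 0 ≤ E := by positivity
  rcases eq_or_ne (Fw Ω a X) ⊤ with hXtop | hXfin
  · rw [hXtop, top_add]; exact le_top
  -- the minimality inequality
  have hmin := hWmin X hXcl
  -- Fw W is finite
  have hWfin : Fw Ω a W ≠ ⊤ := by
    intro hWtop
    rw [Jw, hWtop] at hmin
    simp only [EReal.coe_ennreal_top] at hmin
    rw [EReal.top_add_coe] at hmin
    rw [Jw, coe_ennreal_eq_coe_toReal hXfin, ← EReal.coe_add] at hmin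
    exact (EReal.coe_lt_top _).not_ge hmin
  -- real form of minimality
  have hreal : (Fw Ω a W).toReal + G W ≤ (Fw Ω a X).toReal + G X := by
    rw [Jw, Jw, coe_ennreal_eq_coe_toReal hXfin, coe_ennreal_eq_coe_toReal hWfin,
      ← EReal.coe_add, ← EReal.coe_add] at hmin
    exact_mod_cast hmin
  -- bound on dist
  have hBmeas : MeasurableSet (ball x r) := measurableSet_ball
  have hdist : distW X W ≤ 2 * volume (ball x r) := by
    apply distW_le_two_vol hΩo.measurableSet hXcl hWcl hBmeas hball
    intro i
    rw [symmDiff_comm]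
    exact hXnull i
  have hvol : volume (ball x r) = ENNReal.ofReal (r ^ n)
      * volume (ball (0 : EuclideanSpace ℝ (Fin n)) 1) := by
    rcases Nat.eq_zero_or_pos n with hn | hn
    · subst hn
      have hb : ∀ (y : EuclideanSpace ℝ (Fin 0)) (s : ℝ), 0 < s → ball y s = univ := by
        intro y s hs
        ext z
        simp only [mem_ball, mem_univ, iff_true]
        have : z = y := Subsingleton.elim z y
        simp [this, hs]
      rw [hb x r hr, hb 0 1 one_pos]
      simp
    · haveI : Nonempty (Fin n) := ⟨⟨0, hn⟩⟩
      haveI : Nontrivial (EuclideanSpace ℝ (Fin n)) := by infer_instance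
      rw [Measure.addHaar_ball _ _ hr.le]
      congr 2
      simp
  have hvolfin : (2 : ℝ≥0∞) * volume (ball x r) ≠ ⊤ := by
    apply ENNReal.mul_ne_top (by simp)
    rw [hvol]
    exact ENNReal.mul_ne_top ENNReal.ofReal_ne_top
      (measure_ball_lt_top (x := (0 : EuclideanSpace ℝ (Fin n))) (r := 1)).ne
  have hdistfin : distW X W ≠ ⊤ := (hdist.trans_lt hvolfin.lt_top).ne
  have hdr : (distW X W).toReal ≤ 2 * κ * r ^ n := by
    have := ENNReal.toReal_mono hvolfin hdist
    rw [ENNReal.toReal_mul, hvol, ENNReal.toReal_mul, ENNReal.toReal_ofReal (by positivity)]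
      at this
    calc (distW X W).toReal ≤ 2 * (r ^ n * κ) := by simpa using this
      _ = 2 * κ * r ^ n := by ring
  -- Hölder bound on G
  have hGb : G X - G W ≤ E := by
    have h1 : |G X - G W| ≤ Cα * (distW X W).toReal ^ α := hG X W hXcl hWcl
    have h2 : (distW X W).toReal ^ α ≤ (2 * κ * r ^ n) ^ α :=
      Real.rpow_le_rpow ENNReal.toReal_nonneg hdr hα0.le
    have h3 : (2 * κ * r ^ n : ℝ) ^ α = (2 * κ) ^ α * r ^ (α * n) := by
      rw [Real.mul_rpow (by positivity) (by positivity), ← Real.rpow_natCast r n,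
        ← Real.rpow_mul hr.le, mul_comm (n : ℝ) α]
    calc G X - G W ≤ |G X - G W| := le_abs_self _
      _ ≤ Cα * (distW X W).toReal ^ α := h1
      _ ≤ Cα * (2 * κ * r ^ n) ^ α := by
          exact mul_le_mul_of_nonneg_left h2 hCα
      _ = E := by rw [h3, hE, mul_assoc]
  -- conclude
  have hfinal : (Fw Ω a W).toReal ≤ (Fw Ω a X).toReal + E := by linarith
  rw [← ENNReal.ofReal_toReal hWfin, ← ENNReal.ofReal_toReal hXfin,
    ← ENNReal.ofReal_add ENNReal.toReal_nonneg hE0]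
  exact ENNReal.ofReal_le_ofReal hfinal


end
end

section
/- Let W = (W_1,…,W_N) ∈ F_w(Ω) be such that for every compact set K ⊂ Ω there is a constant C_K ≥ 1 with C_K^{−1} r^{n−1} ≤ H^{n−1}(∂*W_i ∩ B(x,r)) ≤ C_K r^{n−1} for every i ∈ {1,…,N}, every x ∈ ∂*W_i ∩ K, and every 0 < r ≤ 1. Then for each i, H^{n−1}(Ω ∩ cl(∂*W_i) \ ∂*W_i) = 0, where cl denotes topological closure; that is, the closure of the reduced boundary of each W_i in Ω adds only an H^{n−1}-null set. -/
open MeasureTheory Metric Set Filter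
open scoped ENNReal symmDiff

noncomputable section

open scoped Topology


/-- A monotone function whose increments are dominated by those of a continuous
function is continuous. -/
lemma contAux {f g : ℝ → ℝ} (hf : Monotone f) (hg : Continuous g)
    (h : ∀ s t : ℝ, s ≤ t → f t - f s ≤ g t - g s) : Continuous f := by
  rw [Metric.continuous_iff]
  intro a ε hε
  obtain ⟨δ, hδ, hgδ⟩ := Metric.continuous_iff.1 hg a ε hε
  refine ⟨δ, hδ, fun b hb => ?_⟩
  have hga := hgδ b hb
  rw [Real.dist_eq] at hga ⊢
  rcases le_total a b with hab | hab
  · have h1 : 0 ≤ f b - f a := sub_nonneg.2 (hf hab)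
    rw [abs_of_nonneg h1]
    calc f b - f a ≤ g b - g a := h a b hab
      _ ≤ |g b - g a| := le_abs_self _
      _ < ε := hga
  · have h1 : f b - f a ≤ 0 := sub_nonpos.2 (hf hab)
    rw [abs_of_nonpos h1]
    calc -(f b - f a) = f a - f b := by ring
      _ ≤ g a - g b := h b a hab
      _ ≤ |g b - g a| := by rw [abs_sub_comm]; exact le_abs_self _
      _ < ε := hga

section Euclid

variable {n : ℕ}

/-- numerator function -/
def Mfun {n : ℕ} (W : Set (EuclideanSpace ℝ (Fin n))) (x : EuclideanSpace ℝ (Fin n))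
    (s : ℝ) : ℝ := (volume (W ∩ ball x s)).toReal

/-- volume of a ball of radius `s` -/
def vfun (n : ℕ) (s : ℝ) : ℝ :=
  (max s 0) ^ n * (volume (ball (0 : EuclideanSpace ℝ (Fin n)) 1)).toReal

lemma vfun_eq (hn : 0 < n) (x : EuclideanSpace ℝ (Fin n)) (s : ℝ) :
    (volume (ball x s)).toReal = vfun n s := by
  haveI : Nonempty (Fin n) := ⟨⟨0, hn⟩⟩
  rcases le_total s 0 with h | h
  · rw [ball_eq_empty.2 h, measure_empty, ENNReal.toReal_zero, vfun, max_eq_right h,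
      zero_pow hn.ne', zero_mul]
  · rw [vfun, EuclideanSpace.volume_ball (Fin n) x s, EuclideanSpace.volume_ball (Fin n) 0 1]
    simp [ENNReal.toReal_mul, ENNReal.toReal_pow, ENNReal.toReal_ofReal h, max_eq_left h]

lemma vfun_cont : Continuous (vfun n) :=
  (((continuous_id.max continuous_const).pow n).mul continuous_const)

lemma vfun_pos (hn : 0 < n) {r : ℝ} (hr : 0 < r) : 0 < vfun n r := by
  rw [← vfun_eq hn (0 : EuclideanSpace ℝ (Fin n)) r]
  exact ENNReal.toReal_pos (measure_ball_pos volume _ hr).ne' measure_ball_lt_top.ne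

lemma Mfun_mono (W : Set (EuclideanSpace ℝ (Fin n))) (x : EuclideanSpace ℝ (Fin n)) :
    Monotone (Mfun W x) := by
  intro s t hst
  exact ENNReal.toReal_mono
    ((measure_mono inter_subset_right).trans_lt measure_ball_lt_top).ne
    (measure_mono (inter_subset_inter_right _ (ball_subset_ball hst)))

lemma Mfun_incr (hn : 0 < n) (W : Set (EuclideanSpace ℝ (Fin n))) (x : EuclideanSpace ℝ (Fin n))
    {s t : ℝ} (hst : s ≤ t) : Mfun W x t - Mfun W x s ≤ vfun n t - vfun n s := by
  have hfin : ∀ u : ℝ, volume (W ∩ ball x u) ≠ ⊤ := fun u =>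
    ((measure_mono inter_subset_right).trans_lt measure_ball_lt_top).ne
  have hble : Mfun W x t ≤ (volume (ball x t)).toReal := by
    apply ENNReal.toReal_mono measure_ball_lt_top.ne (measure_mono inter_subset_right)
  rcases le_total s 0 with hs | hs
  · have h0 : Mfun W x s = 0 := by
      rw [Mfun, ball_eq_empty.2 hs, inter_empty, measure_empty, ENNReal.toReal_zero]
    have hv0 : vfun n s = 0 := by
      rw [vfun, max_eq_right hs, zero_pow hn.ne', zero_mul]
    rw [h0, hv0, sub_zero, sub_zero, ← vfun_eq hn x t]
    exact hble
  · -- 0 ≤ s ≤ t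
    have hsub : W ∩ ball x t ⊆ (W ∩ ball x s) ∪ (ball x t \ ball x s) := by
      intro z hz
      by_cases h : z ∈ ball x s
      · exact Or.inl ⟨hz.1, h⟩
      · exact Or.inr ⟨hz.2, h⟩
    have h1 : volume (W ∩ ball x t) ≤ volume (W ∩ ball x s) + volume (ball x t \ ball x s) :=
      (measure_mono hsub).trans (measure_union_le _ _)
    have hdiff : volume (ball x t \ ball x s) = volume (ball x t) - volume (ball x s) :=
      measure_diff (ball_subset_ball hst) measurableSet_ball.nullMeasurableSet
        measure_ball_lt_top.ne
    have h2 : (volume (ball x t \ ball x s)).toReal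
        = (volume (ball x t)).toReal - (volume (ball x s)).toReal := by
      rw [hdiff, ENNReal.toReal_sub_of_le (measure_mono (ball_subset_ball hst))
        measure_ball_lt_top.ne]
    have h3 : Mfun W x t ≤ Mfun W x s + (volume (ball x t \ ball x s)).toReal := by
      rw [Mfun, Mfun, ← ENNReal.toReal_add (hfin s)
        ((measure_mono diff_subset).trans_lt measure_ball_lt_top).ne]
      exact ENNReal.toReal_mono
        (by
          apply ENNReal.add_ne_top.2 ⟨hfin s, _⟩
          exact ((measure_mono diff_subset).trans_lt measure_ball_lt_top).ne) h1
    rw [h2, vfun_eq hn x t, vfun_eq hn x s] at h3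
    linarith

lemma Mfun_cont_r (hn : 0 < n) (W : Set (EuclideanSpace ℝ (Fin n))) (x : EuclideanSpace ℝ (Fin n)) :
    Continuous (Mfun W x) :=
  contAux (Mfun_mono W x) vfun_cont (fun _ _ h => Mfun_incr hn W x h)

lemma Mfun_cont_x (hn : 0 < n) (W : Set (EuclideanSpace ℝ (Fin n))) (r : ℝ) :
    Continuous (fun x : EuclideanSpace ℝ (Fin n) => Mfun W x r) := by
  rw [Metric.continuous_iff]
  intro a ε hε
  obtain ⟨δ, hδ, hcont⟩ := Metric.continuous_iff.1 (Mfun_cont_r hn W a) r ε hε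
  refine ⟨δ, hδ, fun b hb => ?_⟩
  have key1 : Mfun W b r ≤ Mfun W a (r + dist b a) := by
    apply ENNReal.toReal_mono
      ((measure_mono inter_subset_right).trans_lt measure_ball_lt_top).ne
    refine measure_mono (inter_subset_inter_right _ (ball_subset_ball' ?_))
    rw [dist_comm]
  have key2 : Mfun W a (r - dist b a) ≤ Mfun W b r := by
    apply ENNReal.toReal_mono
      ((measure_mono inter_subset_right).trans_lt measure_ball_lt_top).ne
    refine measure_mono (inter_subset_inter_right _ (ball_subset_ball' ?_))
    simp [dist_comm a b]
  have e1 : |Mfun W a (r + dist b a) - Mfun W a r| < ε := by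
    have := hcont (r + dist b a) (by rw [Real.dist_eq]; simpa [abs_of_nonneg dist_nonneg] using hb)
    rwa [Real.dist_eq] at this
  have e2 : |Mfun W a (r - dist b a) - Mfun W a r| < ε := by
    have := hcont (r - dist b a) (by rw [Real.dist_eq]; simpa [abs_of_nonneg dist_nonneg] using hb)
    rwa [Real.dist_eq] at this
  rw [Real.dist_eq, abs_sub_lt_iff]
  constructor
  · calc Mfun W b r - Mfun W a r ≤ Mfun W a (r + dist b a) - Mfun W a r := by linarith
      _ ≤ |Mfun W a (r + dist b a) - Mfun W a r| := le_abs_self _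
      _ < ε := e1
  · calc Mfun W a r - Mfun W b r ≤ Mfun W a r - Mfun W a (r - dist b a) := by linarith
      _ ≤ |Mfun W a (r - dist b a) - Mfun W a r| := by rw [abs_sub_comm]; exact le_abs_self _
      _ < ε := e2

end Euclid

section Meas2

variable {n : ℕ}

lemma rat_to_real (hn : 0 < n) (W : Set (EuclideanSpace ℝ (Fin n)))
    (x : EuclideanSpace ℝ (Fin n)) {δ ε dd : ℝ} 
    (h : ∀ q : ℚ, 0 < (q : ℝ) → (q : ℝ) < δ → |Mfun W x q / vfun n q - dd| ≤ ε) :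
    ∀ r : ℝ, 0 < r → r < δ → |Mfun W x r / vfun n r - dd| ≤ ε := by
  intro r hr hrδ
  have hcont : ContinuousAt (fun s => Mfun W x s / vfun n s) r :=
    ContinuousAt.div (Mfun_cont_r hn W x).continuousAt vfun_cont.continuousAt
      (vfun_pos hn hr).ne'
  have hq : ∀ k : ℕ, ∃ q : ℚ, max (r / 2) (r - 1 / (k + 1)) < (q : ℝ) ∧ (q : ℝ) < r := by
    intro k
    apply exists_rat_btwn
    apply max_lt (by linarith)
    have : (0:ℝ) < 1 / (k + 1) := by positivity
    linarith
  choose q hq1 hq2 using hq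
  have hq0 : ∀ k, 0 < ((q k : ℚ) : ℝ) := fun k =>
    lt_trans (by linarith) ((le_max_left _ _).trans_lt (hq1 k))
  have hqbd : ∀ k, |Mfun W x (q k) / vfun n (q k) - dd| ≤ ε := fun k =>
    h (q k) (hq0 k) ((hq2 k).trans hrδ)
  have hlow : Tendsto (fun k : ℕ => r - 1 / ((k : ℝ) + 1)) atTop (𝓝 r) := by
    simpa using tendsto_const_nhds.sub (tendsto_one_div_add_atTop_nhds_zero_nat (𝕜 := ℝ))
  have ht : Tendsto (fun k : ℕ => ((q k : ℚ) : ℝ)) atTop (𝓝 r) :=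
    tendsto_of_tendsto_of_tendsto_of_le_of_le hlow tendsto_const_nhds
      (fun k => ((le_max_right _ _).trans (hq1 k).le)) (fun k => (hq2 k).le)
  have hconv : Tendsto (fun k : ℕ => |Mfun W x (q k) / vfun n (q k) - dd|) atTop
      (𝓝 |Mfun W x r / vfun n r - dd|) :=
    ((hcont.tendsto.comp ht).sub tendsto_const_nhds).abs
  exact le_of_tendsto hconv (Filter.Eventually.of_forall hqbd)

lemma densTo_measurable (hn : 0 < n) (W : Set (EuclideanSpace ℝ (Fin n))) (dd : ℝ) :
    MeasurableSet {x : EuclideanSpace ℝ (Fin n) | densTo W x dd} := by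
  have hrw : ∀ x : EuclideanSpace ℝ (Fin n), densTo W x dd ↔
      Tendsto (fun r => Mfun W x r / vfun n r) (nhdsWithin 0 (Ioi 0)) (𝓝 dd) := by
    intro x
    have he : (fun r : ℝ => (volume (W ∩ ball x r)).toReal / (volume (ball x r)).toReal)
        = fun r => Mfun W x r / vfun n r :=
      funext fun r => by rw [Mfun, vfun_eq hn x r]
    rw [densTo, he]
  have hset : {x : EuclideanSpace ℝ (Fin n) | densTo W x dd} =
      ⋂ (k : ℕ), ⋃ (m : ℕ), ⋂ (q : ℚ), ⋂ (_ : 0 < (q : ℝ) ∧ (q : ℝ) < 1 / (m + 1)),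
        {x | |Mfun W x q / vfun n q - dd| ≤ 1 / (k + 1)} := by
    ext x
    simp only [mem_setOf_eq, mem_iInter, mem_iUnion]
    rw [hrw]
    constructor
    · intro h k
      obtain ⟨δ, hδ, hd⟩ := Metric.tendsto_nhdsWithin_nhds.1 h (1 / (k + 1)) (by positivity)
      obtain ⟨m, hm⟩ := exists_nat_one_div_lt hδ
      refine ⟨m, fun q hq => ?_⟩
      have h1 : dist (q : ℝ) 0 < δ := by
        rw [Real.dist_eq, sub_zero, abs_of_pos hq.1]
        exact hq.2.trans hm
      have := hd hq.1 h1
      rw [Real.dist_eq] at this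
      exact this.le
    · intro h
      rw [Metric.tendsto_nhdsWithin_nhds]
      intro ε hε
      obtain ⟨k, hk⟩ := exists_nat_one_div_lt hε
      obtain ⟨m, hm⟩ := h k
      refine ⟨1 / (m + 1), by positivity, fun {r} hr hrd => ?_⟩
      have hr0 : (0:ℝ) < r := hr
      have hrδ : r < 1 / (m + 1) := by
        rw [Real.dist_eq, sub_zero, abs_of_pos hr0] at hrd
        exact hrd
      have := rat_to_real hn W x (fun q hq0 hqδ => hm q ⟨hq0, hqδ⟩) r hr0 hrδ
      rw [Real.dist_eq]
      exact this.trans_lt hk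
  rw [hset]
  refine MeasurableSet.iInter fun k => MeasurableSet.iUnion fun m =>
    MeasurableSet.iInter fun q => MeasurableSet.iInter fun hq => ?_
  have hc : Continuous fun x : EuclideanSpace ℝ (Fin n) =>
      |Mfun W x q / vfun n q - dd| :=
    (((Mfun_cont_x hn W q).div_const _).sub continuous_const).abs
  exact (isClosed_le hc continuous_const).measurableSet

lemma redBdry_measurable (hn : 0 < n) (Ω W : Set (EuclideanSpace ℝ (Fin n)))
    (hΩo : IsOpen Ω) : MeasurableSet (redBdry Ω W) := by
  have : redBdry Ω W = Ω ∩ ({x | densTo W x 0}ᶜ ∩ {x | densTo W x 1}ᶜ) := by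
    ext x; simp [redBdry]; tauto
  rw [this]
  exact hΩo.measurableSet.inter
    (((densTo_measurable hn W 0).compl).inter ((densTo_measurable hn W 1).compl))

end Meas2


section Main

variable {n : ℕ}

lemma ediam_cb_le {X : Type*} [PseudoMetricSpace X] (b : X) {s : ℝ} (hs : 0 ≤ s) :
    EMetric.diam (closedBall b s) ≤ ENNReal.ofReal (2 * s) := by
  rw [← Metric.emetric_closedBall hs]
  calc EMetric.diam (EMetric.closedBall b (ENNReal.ofReal s))
      ≤ 2 * ENNReal.ofReal s := EMetric.diam_closedBall
    _ = ENNReal.ofReal (2 * s) := by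
        rw [ENNReal.ofReal_mul (by norm_num : (0:ℝ) ≤ 2)]
        norm_num

lemma key_compact (hn : 0 < n) (Ω S : Set (EuclideanSpace ℝ (Fin n)))
    (hΩo : IsOpen Ω) (hSm : MeasurableSet S)
    (hfin : ∀ K : Set (EuclideanSpace ℝ (Fin n)), IsCompact K → K ⊆ Ω →
      μH[(n : ℝ) - 1] (K ∩ S) < ⊤)
    (hAR' : ∀ K : Set (EuclideanSpace ℝ (Fin n)), IsCompact K → K ⊆ Ω → ∃ C : ℝ, 1 ≤ C ∧
      ∀ x ∈ S ∩ K, ∀ r : ℝ, 0 < r → r ≤ 1 →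
        ENNReal.ofReal (C⁻¹ * r ^ ((n : ℝ) - 1)) ≤ μH[(n : ℝ) - 1] (S ∩ ball x r))
    (K : Set (EuclideanSpace ℝ (Fin n))) (hKc : IsCompact K) (hKΩ : K ⊆ Ω) :
    μH[(n : ℝ) - 1] (((Ω ∩ closure S) \ S) ∩ K) = 0 := by
  set d : ℝ := (n : ℝ) - 1 with hd_def
  have hd : 0 ≤ d := by
    rw [hd_def, sub_nonneg]
    exact_mod_cast hn
  set A : Set (EuclideanSpace ℝ (Fin n)) := ((Ω ∩ closure S) \ S) ∩ K with hA_def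
  -- thickened compact set
  obtain ⟨ρ0, hρ0, hthick⟩ := hKc.exists_thickening_subset_open hΩo hKΩ
  set ρ : ℝ := ρ0 / 2 with hρ_def
  have hρ : 0 < ρ := by positivity
  set K' : Set (EuclideanSpace ℝ (Fin n)) := Metric.cthickening ρ K with hK'_def
  have hK'c : IsCompact K' := hKc.cthickening
  have hK'Ω : K' ⊆ Ω :=
    (Metric.cthickening_subset_thickening' hρ0 (by linarith) K).trans hthick
  obtain ⟨C, hC1, hCb⟩ := hAR' K' hK'c hK'Ω
  have hC0 : 0 < C := lt_of_lt_of_le zero_lt_one hC1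
  -- the finite restricted measure
  set ν : Measure (EuclideanSpace ℝ (Fin n)) := (μH[d]).restrict (S ∩ K') with hν_def
  have hfin' : μH[d] (S ∩ K') < ⊤ := by
    rw [Set.inter_comm]
    exact hfin K' hK'c hK'Ω
  haveI : IsFiniteMeasure ν := by
    constructor
    rw [hν_def, Measure.restrict_apply_univ]
    exact hfin'
  have hAm : MeasurableSet A :=
    (((hΩo.measurableSet.inter isClosed_closure.measurableSet).diff hSm).inter
      hKc.measurableSet)
  have hνA : ν A = 0 := by
    rw [hν_def, Measure.restrict_apply hAm]
    have : A ∩ (S ∩ K') = ∅ := by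
      apply Set.eq_empty_of_forall_notMem
      rintro x ⟨hxA, hxS, -⟩
      exact hxA.1.2 hxS
    rw [this, measure_empty]
  -- main estimate
  have hsuff : ∀ ε : ℝ≥0∞, 0 < ε → μH[d] A ≤ ENNReal.ofReal ((20:ℝ) ^ d * C) * ε := by
    intro ε hε
    obtain ⟨U, hAU, hUo, hUε⟩ := Set.exists_isOpen_lt_of_lt A ε (by rw [hνA]; exact hε)
    -- choice of good balls at every scale
    have hball : ∀ δ : ℝ, 0 < δ → ∀ x ∈ A, ∃ r : ℝ,
        0 < r ∧ r ≤ δ ∧ r ≤ ρ ∧ closedBall x r ⊆ U ∧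
          ENNReal.ofReal ((r / 2) ^ d) ≤ ENNReal.ofReal C * ν (closedBall x r) := by
      intro δ hδ x hx
      obtain ⟨r1, hr1, hr1U⟩ := Metric.isOpen_iff.1 hUo x (hAU hx)
      refine ⟨min (min δ ρ) (min 1 (r1 / 2)), ?_, ?_, ?_, ?_, ?_⟩
      · positivity
      · exact le_trans (min_le_left _ _) (min_le_left _ _)
      · exact le_trans (min_le_left _ _) (min_le_right _ _)
      · refine (Metric.closedBall_subset_ball ?_).trans hr1U
        calc min (min δ ρ) (min 1 (r1 / 2)) ≤ r1 / 2 :=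
              le_trans (min_le_right _ _) (min_le_right _ _)
          _ < r1 := by linarith
      · set r : ℝ := min (min δ ρ) (min 1 (r1 / 2)) with hr_def
        have hr0 : 0 < r := by positivity
        have hr1' : r ≤ 1 := le_trans (min_le_right _ _) (min_le_left _ _)
        have hrρ : r ≤ ρ := le_trans (min_le_left _ _) (min_le_right _ _)
        -- find a point of S near x
        obtain ⟨y, hyS, hxy⟩ := Metric.mem_closure_iff.1 hx.1.1.2 (r / 2) (by positivity)
        have hyx : dist y x < r / 2 := by rw [dist_comm]; exact hxy
        have hyK' : y ∈ K' := by
          apply Metric.mem_cthickening_of_dist_le y x ρ K hx.2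
          linarith
        have hlow := hCb y ⟨hyS, hyK'⟩ (r / 2) (by positivity) (by linarith)
        have hsub : S ∩ ball y (r / 2) ⊆ closedBall x r ∩ (S ∩ K') := by
          rintro z ⟨hzS, hzb⟩
          rw [mem_ball] at hzb
          have hzx : dist z x ≤ r := by
            have h3 := dist_triangle z y x
            linarith
          refine ⟨mem_closedBall.2 hzx, hzS, ?_⟩
          exact Metric.mem_cthickening_of_dist_le z x ρ K hx.2 (hzx.trans hrρ)
        have hmono : μH[d] (S ∩ ball y (r / 2)) ≤ ν (closedBall x r) := by
          rw [hν_def, Measure.restrict_apply measurableSet_closedBall]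
          exact measure_mono hsub
        calc ENNReal.ofReal ((r / 2) ^ d)
            = ENNReal.ofReal (C * (C⁻¹ * (r / 2) ^ d)) := by
              congr 1
              field_simp
          _ = ENNReal.ofReal C * ENNReal.ofReal (C⁻¹ * (r / 2) ^ d) := by
              rw [ENNReal.ofReal_mul hC0.le]
          _ ≤ ENNReal.ofReal C * ν (closedBall x r) := by
              gcongr
              exact hlow.trans hmono
    -- scale-indexed covers
    have hk : ∀ δ : ℝ, 0 < δ → ∃ (u : Set (EuclideanSpace ℝ (Fin n)))
        (rr : EuclideanSpace ℝ (Fin n) → ℝ), u.Countable ∧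
        (∀ b ∈ u, 0 < rr b ∧ rr b ≤ δ) ∧
        (A ⊆ ⋃ (b : EuclideanSpace ℝ (Fin n)) (_ : b ∈ u), closedBall b (5 * rr b)) ∧
        ∑' (b : u), EMetric.diam (closedBall (b : EuclideanSpace ℝ (Fin n)) (5 * rr b)) ^ d
          ≤ ENNReal.ofReal ((20:ℝ) ^ d * C) * ν U := by
      intro δ hδ
      classical
      set rr : EuclideanSpace ℝ (Fin n) → ℝ := fun x =>
        if hx : x ∈ A then (hball δ hδ x hx).choose else 1 with hrr_def
      have hrr : ∀ x ∈ A, 0 < rr x ∧ rr x ≤ δ ∧ rr x ≤ ρ ∧ closedBall x (rr x) ⊆ U ∧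
          ENNReal.ofReal ((rr x / 2) ^ d) ≤ ENNReal.ofReal C * ν (closedBall x (rr x)) := by
        intro x hx
        rw [hrr_def]
        simp only [dif_pos hx]
        exact (hball δ hδ x hx).choose_spec
      obtain ⟨u, huA, hdisj, hcov⟩ :=
        Vitali.exists_disjoint_subfamily_covering_enlargement_closedBall A (fun a => a) rr δ
          (fun a ha => (hrr a ha).2.1) 5 (by norm_num)
      have hrpos : ∀ b ∈ u, 0 < rr b := fun b hb => (hrr b (huA hb)).1
      have hucnt : u.Countable := by
        apply hdisj.countable_of_nonempty_interior
        intro b hb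
        exact ⟨b, ball_subset_interior_closedBall (mem_ball_self (hrpos b hb))⟩
      refine ⟨u, rr, hucnt, fun b hb => ⟨hrpos b hb, (hrr b (huA hb)).2.1⟩, ?_, ?_⟩
      · intro a ha
        obtain ⟨b, hbu, hsub⟩ := hcov a ha
        refine Set.mem_iUnion₂.2 ⟨b, hbu, hsub ?_⟩
        exact mem_closedBall_self (hrr a ha).1.le
      · have hterm : ∀ b : u,
            EMetric.diam (closedBall (b : EuclideanSpace ℝ (Fin n)) (5 * rr b)) ^ d
              ≤ ENNReal.ofReal ((20:ℝ) ^ d) * (ENNReal.ofReal C * ν (closedBall (b : EuclideanSpace ℝ (Fin n)) (rr b))) := by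
          rintro ⟨b, hb⟩
          have hrb := hrpos b hb
          have hdiam : EMetric.diam (closedBall b (5 * rr b)) ≤ ENNReal.ofReal (10 * rr b) := by
            have := ediam_cb_le b (by positivity : (0:ℝ) ≤ 5 * rr b)
            rwa [show (2:ℝ) * (5 * rr b) = 10 * rr b by ring] at this
          calc EMetric.diam (closedBall b (5 * rr b)) ^ d
              ≤ ENNReal.ofReal (10 * rr b) ^ d := ENNReal.rpow_le_rpow hdiam hd
            _ = ENNReal.ofReal ((10 * rr b) ^ d) :=
                ENNReal.ofReal_rpow_of_pos (by positivity)
            _ = ENNReal.ofReal ((20:ℝ) ^ d * (rr b / 2) ^ d) := by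
                rw [← Real.mul_rpow (by norm_num) (by positivity)]
                congr 2
                ring
            _ = ENNReal.ofReal ((20:ℝ) ^ d) * ENNReal.ofReal ((rr b / 2) ^ d) := by
                rw [ENNReal.ofReal_mul (by positivity)]
            _ ≤ ENNReal.ofReal ((20:ℝ) ^ d) * (ENNReal.ofReal C * ν (closedBall b (rr b))) := by
                gcongr
                exact (hrr b (huA hb)).2.2.2.2
        calc ∑' (b : u), EMetric.diam (closedBall (b : EuclideanSpace ℝ (Fin n)) (5 * rr b)) ^ d
            ≤ ∑' (b : u), ENNReal.ofReal ((20:ℝ) ^ d) *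
                (ENNReal.ofReal C * ν (closedBall (b : EuclideanSpace ℝ (Fin n)) (rr b))) :=
              ENNReal.tsum_le_tsum hterm
          _ = ENNReal.ofReal ((20:ℝ) ^ d) * ENNReal.ofReal C *
                ∑' (b : u), ν (closedBall (b : EuclideanSpace ℝ (Fin n)) (rr b)) := by
              rw [mul_assoc, ENNReal.tsum_mul_left, ENNReal.tsum_mul_left]
          _ = ENNReal.ofReal ((20:ℝ) ^ d) * ENNReal.ofReal C *
                ν (⋃ b ∈ u, closedBall b (rr b)) := by
              rw [measure_biUnion hucnt hdisj (fun b _ => measurableSet_closedBall)]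
          _ ≤ ENNReal.ofReal ((20:ℝ) ^ d) * ENNReal.ofReal C * ν U := by
              gcongr
              apply Set.iUnion₂_subset
              intro b hb
              exact (hrr b (huA hb)).2.2.2.1
          _ = ENNReal.ofReal ((20:ℝ) ^ d * C) * ν U := by
              rw [ENNReal.ofReal_mul (by positivity)]
    -- apply the Hausdorff measure cover bound
    have hchoice : ∀ k : ℕ, ∃ (u : Set (EuclideanSpace ℝ (Fin n)))
        (rr : EuclideanSpace ℝ (Fin n) → ℝ), u.Countable ∧
        (∀ b ∈ u, 0 < rr b ∧ rr b ≤ 1 / (k + 1)) ∧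
        (A ⊆ ⋃ (b : EuclideanSpace ℝ (Fin n)) (_ : b ∈ u), closedBall b (5 * rr b)) ∧
        ∑' (b : u), EMetric.diam (closedBall (b : EuclideanSpace ℝ (Fin n)) (5 * rr b)) ^ d
          ≤ ENNReal.ofReal ((20:ℝ) ^ d * C) * ν U :=
      fun k => hk (1 / (k + 1)) (by positivity)
    choose u rr hcnt hsize hcov hsum using hchoice
    haveI : ∀ k : ℕ, Countable (u k) := fun k => (hcnt k).to_subtype
    have hmain := MeasureTheory.Measure.hausdorffMeasure_le_liminf_tsum d A
      (fun k : ℕ => ENNReal.ofReal (10 * (1 / (k + 1))))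
      (by
        have h0 : Filter.Tendsto (fun k : ℕ => 10 * (1 / ((k:ℝ) + 1))) Filter.atTop (nhds 0) := by
          simpa using (tendsto_one_div_add_atTop_nhds_zero_nat (𝕜 := ℝ)).const_mul 10
        have := (ENNReal.tendsto_ofReal h0)
        simpa using this)
      (fun k (b : u k) => closedBall (b : EuclideanSpace ℝ (Fin n)) (5 * rr k b))
      (by
        apply Filter.Eventually.of_forall
        rintro k ⟨b, hb⟩
        have h1 : EMetric.diam (closedBall b (5 * rr k b)) ≤ ENNReal.ofReal (10 * rr k b) := by
          have := ediam_cb_le b (by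
            have := (hsize k b hb).1
            positivity : (0:ℝ) ≤ 5 * rr k b)
          rwa [show (2:ℝ) * (5 * rr k b) = 10 * rr k b by ring] at this
        refine h1.trans (ENNReal.ofReal_le_ofReal ?_)
        have := (hsize k b hb).2
        linarith)
      (by
        apply Filter.Eventually.of_forall
        intro k
        intro a ha
        obtain ⟨b, hb, hsub⟩ := Set.mem_iUnion₂.1 (hcov k ha)
        exact Set.mem_iUnion.2 ⟨⟨b, hb⟩, hsub⟩)
    refine hmain.trans ?_
    have hlim : Filter.liminf (fun k : ℕ => ∑' (b : u k),
        EMetric.diam (closedBall (b : EuclideanSpace ℝ (Fin n)) (5 * rr k b)) ^ d)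
          Filter.atTop ≤ ENNReal.ofReal ((20:ℝ) ^ d * C) * ν U := by
      refine le_trans (Filter.liminf_le_liminf (Filter.Eventually.of_forall hsum)) ?_
      rw [Filter.liminf_const]
    exact hlim.trans (mul_le_mul_right hUε.le _)
  -- conclude
  have hc_ne_top : ENNReal.ofReal ((20:ℝ) ^ d * C) ≠ ⊤ := ENNReal.ofReal_ne_top
  have hfinA : μH[d] A ≠ ⊤ := by
    refine ne_top_of_le_ne_top ?_ (hsuff 1 zero_lt_one)
    simp [ENNReal.mul_ne_top, hc_ne_top]
  by_contra hne
  have hhalf : (0:ℝ≥0∞) < μH[d] A / 2 / ENNReal.ofReal ((20:ℝ) ^ d * C) := by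
    apply ENNReal.div_pos
    · exact (ENNReal.half_pos hne).ne'
    · exact hc_ne_top
  have hle : μH[d] A ≤ μH[d] A / 2 :=
    (hsuff _ hhalf).trans (ENNReal.mul_div_le)
  exact absurd (hle.trans_lt (ENNReal.half_lt_self hne hfinA)) (lt_irrefl _)

end Main


/-- Proposition 5.1, (5.2): if each `∂*W_i` is locally
Ahlfors regular of dimension `n-1` in `Ω`, then the closure of `∂*W_i` in
`Ω` adds only an `H^{n-1}`-null set. -/
theorem stmt7 {n N : ℕ} (hN : 1 ≤ N) (Ω : Set (EuclideanSpace ℝ (Fin n)))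
    (hΩo : IsOpen Ω) (hΩb : Bornology.IsBounded Ω)
    (W : Fin N → Set (EuclideanSpace ℝ (Fin n))) (hW : FwClass Ω W)
    (hAR : ∀ K : Set (EuclideanSpace ℝ (Fin n)), IsCompact K → K ⊆ Ω →
      ∃ CK : ℝ, 1 ≤ CK ∧ ∀ (i : Fin N) (x : EuclideanSpace ℝ (Fin n)) (r : ℝ),
        x ∈ redBdry Ω (W i) ∩ K → 0 < r → r ≤ 1 →
          ENNReal.ofReal (CK⁻¹ * r ^ ((n : ℝ) - 1))
              ≤ μH[(n : ℝ) - 1] (redBdry Ω (W i) ∩ ball x r) ∧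
            μH[(n : ℝ) - 1] (redBdry Ω (W i) ∩ ball x r)
              ≤ ENNReal.ofReal (CK * r ^ ((n : ℝ) - 1))) :
    ∀ i : Fin N,
      μH[(n : ℝ) - 1] ((Ω ∩ closure (redBdry Ω (W i))) \ redBdry Ω (W i)) = 0 := by
  intro i
  rcases Nat.eq_zero_or_pos n with hn0 | hn
  · subst hn0
    haveI : Subsingleton (EuclideanSpace ℝ (Fin 0)) :=
      ⟨fun a b => WithLp.ofLp_injective _ <| funext fun j => absurd j.2 (Nat.not_lt_zero _)⟩
    have hcl : closure (redBdry Ω (W i)) ⊆ redBdry Ω (W i) := by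
      intro x hx
      rcases Set.eq_empty_or_nonempty (redBdry Ω (W i)) with he | ⟨y, hy⟩
      · rw [he, closure_empty] at hx
        exact absurd hx (Set.notMem_empty x)
      · have hxy : x = y := Subsingleton.elim x y
        rw [hxy]; exact hy
    have hempty : (Ω ∩ closure (redBdry Ω (W i))) \ redBdry Ω (W i) = ∅ := by
      apply Set.eq_empty_of_forall_notMem
      rintro x ⟨⟨-, hx⟩, hnx⟩
      exact hnx (hcl hx)
    rw [hempty, measure_empty]
  · set S : Set (EuclideanSpace ℝ (Fin n)) := redBdry Ω (W i) with hS_def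
    have hSm : MeasurableSet S := redBdry_measurable hn Ω (W i) hΩo
    have hfinS : ∀ K : Set (EuclideanSpace ℝ (Fin n)), IsCompact K → K ⊆ Ω →
        μH[(n : ℝ) - 1] (K ∩ S) < ⊤ := by
      intro K hKc hKΩ
      have := hW.2.2.1 i K hKc hKΩ
      rwa [perMeas, Measure.restrict_apply hKc.measurableSet] at this
    have hAR' : ∀ K : Set (EuclideanSpace ℝ (Fin n)), IsCompact K → K ⊆ Ω → ∃ C : ℝ,
        1 ≤ C ∧ ∀ x ∈ S ∩ K, ∀ r : ℝ, 0 < r → r ≤ 1 →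
          ENNReal.ofReal (C⁻¹ * r ^ ((n : ℝ) - 1)) ≤ μH[(n : ℝ) - 1] (S ∩ ball x r) := by
      intro K hKc hKΩ
      obtain ⟨C, hC1, hC⟩ := hAR K hKc hKΩ
      exact ⟨C, hC1, fun x hx r hr hr1 => (hC i x r hx hr hr1).1⟩
    by_cases hΩe : Ω = ∅
    · have hempty : (Ω ∩ closure S) \ S = ∅ := by
        rw [hΩe]
        simp
      rw [hempty, measure_empty]
    · have hΩc_ne : Ωᶜ.Nonempty := by
        rcases Set.eq_empty_or_nonempty Ωᶜ with hc | hc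
        · exfalso
          have huniv : Ω = univ := Set.compl_empty_iff.1 hc
          haveI : Nontrivial (EuclideanSpace ℝ (Fin n)) := by
            apply Module.nontrivial_of_finrank_pos (R := ℝ)
            rw [finrank_euclideanSpace_fin]
            exact hn
          exact NormedSpace.unbounded_univ ℝ (EuclideanSpace ℝ (Fin n)) (huniv ▸ hΩb)
        · exact hc
      set Km : ℕ → Set (EuclideanSpace ℝ (Fin n)) := fun m =>
        {x | 1 / ((m : ℝ) + 1) ≤ infDist x Ωᶜ} ∩ closure Ω with hKm_def
      have hKmc : ∀ m, IsCompact (Km m) := by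
        intro m
        have hcl : IsClosed (Km m) :=
          (isClosed_le continuous_const (continuous_infDist_pt _)).inter isClosed_closure
        exact Metric.isCompact_of_isClosed_isBounded hcl
          (hΩb.closure.subset Set.inter_subset_right)
      have hKmΩ : ∀ m, Km m ⊆ Ω := by
        intro m x hx
        have hpos : 0 < infDist x Ωᶜ := lt_of_lt_of_le (by positivity) hx.1
        have hnot : x ∉ Ωᶜ :=
          (hΩo.isClosed_compl.notMem_iff_infDist_pos hΩc_ne).2 hpos
        simpa using hnot
      have hcover : (Ω ∩ closure S) \ S ⊆ ⋃ m, ((Ω ∩ closure S) \ S) ∩ Km m := by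
        intro x hx
        have hxΩ : x ∈ Ω := hx.1.1
        have hnot : x ∉ Ωᶜ := by simpa using hxΩ
        have hpos : 0 < infDist x Ωᶜ :=
          (hΩo.isClosed_compl.notMem_iff_infDist_pos hΩc_ne).1 hnot
        obtain ⟨m, hm⟩ := exists_nat_one_div_lt hpos
        exact Set.mem_iUnion.2 ⟨m, hx, hm.le, subset_closure hxΩ⟩
      refine measure_mono_null hcover (measure_iUnion_null fun m => ?_)
      exact key_compact hn Ω S hΩo hSm hfinS hAR' (Km m) (hKmc m) (hKmΩ m)

end
end

section
/- Let W = (W_1,…,W_N) ∈ F_w(Ω) be such that for every compact set K ⊂ Ω there is a constant C_K ≥ 1 with C_K^{−1} r^{n−1} ≤ H^{n−1}(∂*(W) ∩ B(x,r)) ≤ C_K r^{n−1} for every x ∈ ∂*(W) ∩ K and every 0 < r ≤ 1, where ∂*(W) = ∪_{i=1}^N ∂*W_i is the total reduced boundary. Then H^{n−1}(Ω ∩ cl(∂*(W)) \ ∂*(W)) = 0, where cl denotes topological closure. -/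
open MeasureTheory Metric Set Filter
open scoped ENNReal symmDiff

noncomputable section

/-!
Write `E = ∂*(W)`, `d = n - 1` and `S = (Ω ∩ cl E) \ E`. Near a point of `Ω`, every `x ∈ S` is
within `r/2` of some `e ∈ E`, so the lower Ahlfors bound at `e` gives
`H^d(E ∩ B(x, r)) ≥ c r^d`, while the upper bound makes `ν = H^d ⌊ E` locally finite.
If a measure `ν` has lower `d`-density at least `c` on a set `A ⊆ U`, `U` open, then
`H^d(A) ≤ 4^d c⁻¹ ν(U)`: a maximal `ε`-separated subset of `A` gives a cover by `ε`-balls, and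
the disjoint `ε/2`-balls around its points bound its cardinality by `ν(U) / (c (ε/2)^d)`.
As `ν(S) = 0` and `ν` is outer regular, `H^d(S) = 0`.
-/

open scoped NNReal Topology

section PackingBound

variable {X : Type*} [PseudoMetricSpace X] [MeasurableSpace X] [OpensMeasurableSpace X]
  {ν : Measure X} {ε : ℝ≥0} {U : Set X} {q : ℝ≥0∞}

lemma IsSeparated.card_mul_le_measure {F : Finset X} (hF : IsSeparated ε (F : Set X))
    (hU : ∀ x ∈ F, ball x (ε / 2) ⊆ U) (hq : ∀ x ∈ F, q ≤ ν (ball x (ε / 2))) :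
    F.card * q ≤ ν U := by
  have hdisj : (F : Set X).PairwiseDisjoint fun x => ball x (ε / 2) := by
    intro x hx y hy hxy
    have hsep : (ε : ℝ) < dist x y := by
      have : (ε : ℝ≥0∞) < edist x y := hF hx hy hxy
      rwa [edist_nndist, ENNReal.coe_lt_coe, ← NNReal.coe_lt_coe, coe_nndist] at this
    exact ball_disjoint_ball (by linarith)
  calc (F.card : ℝ≥0∞) * q = ∑ _x ∈ F, q := by rw [Finset.sum_const, nsmul_eq_mul]
    _ ≤ ∑ x ∈ F, ν (ball x (ε / 2)) := Finset.sum_le_sum hq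
    _ = ν (⋃ x ∈ F, ball x (ε / 2)) :=
      (measure_biUnion_finset hdisj fun _ _ => measurableSet_ball).symm
    _ ≤ ν U := measure_mono (iUnion₂_subset hU)

lemma IsSeparated.encard_mul_le_measure {C : Set X} (hC : IsSeparated ε C)
    (hU : ∀ x ∈ C, ball x (ε / 2) ⊆ U) (hq : ∀ x ∈ C, q ≤ ν (ball x (ε / 2))) :
    (C.encard : ℝ≥0∞) * q ≤ ν U := by
  have hcard : ∀ k : ℕ, (k : ℕ∞) ≤ C.encard → (k : ℝ≥0∞) * q ≤ ν U := by
    intro k hk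
    obtain ⟨t, htC, htk⟩ := exists_subset_encard_eq hk
    lift t to Finset X using finite_of_encard_eq_coe htk
    rw [encard_coe_eq_coe_finsetCard, Nat.cast_inj] at htk
    rw [← htk]
    exact IsSeparated.card_mul_le_measure (hC.subset htC) (fun x hx => hU x (htC hx))
      (fun x hx => hq x (htC hx))
  by_cases htop : C.encard = ⊤
  · rw [htop, ENat.toENNReal_top, ← ENNReal.iSup_natCast, ENNReal.iSup_mul]
    exact iSup_le fun k => hcard k (htop ▸ le_top)
  · obtain ⟨k, hk⟩ := ENat.ne_top_iff_exists.1 htop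
    rw [← hk, ENat.toENNReal_coe]
    exact hcard k hk.le

lemma packingNumber_mul_le_measure {A : Set X} (hU : ∀ x ∈ A, ball x (ε / 2) ⊆ U)
    (hq : ∀ x ∈ A, q ≤ ν (ball x (ε / 2))) : (packingNumber ε A : ℝ≥0∞) * q ≤ ν U := by
  simp only [packingNumber, ENat.toENNReal_iSup, ENNReal.iSup_mul, iSup_le_iff]
  exact fun C hCA hC =>
    IsSeparated.encard_mul_le_measure hC (fun x hx => hU x (hCA hx)) (fun x hx => hq x (hCA hx))

end PackingBound

section LowerDensity

variable {X : Type*} [MetricSpace X] [MeasurableSpace X] [BorelSpace X] {d : ℝ}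

lemma hausdorffMeasure_le_of_packingNumber (hd : 0 ≤ d) {s : Set X} {M : ℝ≥0∞}
    (h : ∀ᶠ ε : ℝ≥0 in 𝓝[>] 0, (packingNumber ε s : ℝ≥0∞) * ENNReal.ofReal ((2 * ε) ^ d) ≤ M) :
    μH[d] s ≤ M := by
  rcases eq_or_ne M ⊤ with rfl | hM
  · exact le_top
  have hfin : ∀ᶠ ε : ℝ≥0 in 𝓝[>] 0, packingNumber ε s ≠ ⊤ := by
    filter_upwards [h, self_mem_nhdsWithin] with ε hε (hε0 : 0 < ε) htop
    have hpos : ENNReal.ofReal ((2 * ε) ^ d) ≠ 0 :=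
      (ENNReal.ofReal_pos.2 (Real.rpow_pos_of_pos (by positivity) d)).ne'
    rw [htop, ENat.toENNReal_top, ENNReal.top_mul hpos] at hε
    exact hM (top_le_iff.1 hε)
  have hcount (ε : ℝ≥0) : Countable (maximalSeparatedSet ε s) := by
    by_cases hε : packingNumber ε s = ⊤
    · simp [maximalSeparatedSet, hε]
    · exact (encard_ne_top_iff.1 (by rwa [encard_maximalSeparatedSet hε])).countable.to_subtype
  calc μH[d] s
      ≤ liminf (fun ε : ℝ≥0 => ∑' i : maximalSeparatedSet ε s,
          ediam (closedBall (i : X) ε) ^ d) (𝓝[>] 0) := by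
        have hr : Tendsto (fun ε : ℝ≥0 => 2 * (ε : ℝ≥0∞)) (𝓝[>] 0) (𝓝 0) := by
          have h0 : Tendsto (fun ε : ℝ≥0 => (ε : ℝ≥0∞)) (𝓝[>] 0) (𝓝 0) :=
            ENNReal.tendsto_coe.2 (tendsto_nhdsWithin_of_tendsto_nhds tendsto_id)
          simpa using ENNReal.Tendsto.const_mul (a := 2) h0 (by simp)
        refine Measure.hausdorffMeasure_le_liminf_tsum d s _ hr _
          (Eventually.of_forall fun ε i => ?_) ?_
        · rw [← closedEBall_coe]; exact ediam_closedEBall_le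
        · filter_upwards [hfin] with ε hε
          simpa [iUnion_subtype] using
            isCover_iff_subset_iUnion_closedBall.1 (isCover_maximalSeparatedSet hε)
    _ ≤ M := by
        refine liminf_le_of_frequently_le' ((h.and hfin).frequently.mono fun ε ⟨hε, hεtop⟩ => ?_)
        calc ∑' i : maximalSeparatedSet ε s, ediam (closedBall (i : X) ε) ^ d
            ≤ ∑' _ : maximalSeparatedSet ε s, ENNReal.ofReal ((2 * ε) ^ d) := by
              refine ENNReal.tsum_le_tsum fun i => ?_
              rw [← ENNReal.ofReal_rpow_of_nonneg (by positivity) hd]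
              refine ENNReal.rpow_le_rpow ?_ hd
              rw [← closedEBall_coe, ENNReal.ofReal_mul zero_le_two, ENNReal.ofReal_coe_nnreal,
                ENNReal.ofReal_ofNat]
              exact ediam_closedEBall_le
          _ = (packingNumber ε s : ℝ≥0∞) * ENNReal.ofReal ((2 * ε) ^ d) := by
              rw [ENNReal.tsum_const, ← encard_maximalSeparatedSet hεtop]
              rfl
          _ ≤ M := hε

variable {ν : Measure X} {c r₀ : ℝ} {A U : Set X}

lemma hausdorffMeasure_le_of_le_measure_ball (hd : 0 ≤ d) (hc : 0 < c) (hr₀ : 0 < r₀)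
    (hAU : ∀ x ∈ A, ball x r₀ ⊆ U)
    (hlow : ∀ x ∈ A, ∀ r, 0 < r → r ≤ r₀ → ENNReal.ofReal (c * r ^ d) ≤ ν (ball x r)) :
    μH[d] A ≤ ENNReal.ofReal (4 ^ d / c) * ν U := by
  refine hausdorffMeasure_le_of_packingNumber hd ?_
  have hsmall : ∀ᶠ ε : ℝ≥0 in 𝓝[>] 0, ε < r₀.toNNReal :=
    nhdsWithin_le_nhds (Iio_mem_nhds (by simpa using hr₀))
  filter_upwards [hsmall, self_mem_nhdsWithin] with ε hεr₀ (hε : 0 < ε)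
  rw [Real.lt_toNNReal_iff_coe_lt] at hεr₀
  have hpack := packingNumber_mul_le_measure (ν := ν) (ε := ε) (A := A)
    (q := ENNReal.ofReal (c * (ε / 2) ^ d))
    (fun x hx => (ball_subset_ball (by linarith)).trans (hAU x hx))
    (fun x hx => hlow x hx _ (by positivity) (by linarith))
  have hsplit : ENNReal.ofReal ((2 * ε) ^ d)
      = ENNReal.ofReal (4 ^ d / c) * ENNReal.ofReal (c * (ε / 2) ^ d) := by
    rw [← ENNReal.ofReal_mul (by positivity), show (2 * (ε : ℝ)) = 4 * (ε / 2) by ring,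
      Real.mul_rpow (by norm_num) (by positivity)]
    field_simp
  calc (packingNumber ε A : ℝ≥0∞) * ENNReal.ofReal ((2 * ε) ^ d)
      = ENNReal.ofReal (4 ^ d / c) * (packingNumber ε A * ENNReal.ofReal (c * (ε / 2) ^ d)) := by
        rw [hsplit]; ring
    _ ≤ ENNReal.ofReal (4 ^ d / c) * ν U := by gcongr

lemma hausdorffMeasure_le_of_le_measure_ball_of_isOpen (hd : 0 ≤ d) (hc : 0 < c)
    (hr₀ : 0 < r₀) (hU : IsOpen U) (hAU : A ⊆ U)
    (hlow : ∀ x ∈ A, ∀ r, 0 < r → r ≤ r₀ → ENNReal.ofReal (c * r ^ d) ≤ ν (ball x r)) :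
    μH[d] A ≤ ENNReal.ofReal (4 ^ d / c) * ν U := by
  set B : ℕ → Set X := fun m => {x ∈ A | ball x (1 / (m + 1)) ⊆ U}
  have hB : Monotone B := fun k m hkm x hx =>
    ⟨hx.1, (ball_subset_ball (Nat.one_div_le_one_div hkm)).trans hx.2⟩
  have hBA : ⋃ m, B m = A := by
    refine subset_antisymm (iUnion_subset fun m x hx => hx.1) fun x hx => ?_
    obtain ⟨r, hr, hxr⟩ := isOpen_iff.1 hU x (hAU hx)
    obtain ⟨m, hm⟩ := exists_nat_one_div_lt hr
    exact mem_iUnion.2 ⟨m, hx, (ball_subset_ball hm.le).trans hxr⟩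
  rw [← hBA, hB.measure_iUnion]
  refine iSup_le fun m => hausdorffMeasure_le_of_le_measure_ball hd hc
    (r₀ := min r₀ (1 / (m + 1))) (by positivity)
    (fun x hx => (ball_subset_ball (min_le_right _ _)).trans hx.2)
    (fun x hx r hr hrm => hlow x hx.1 r hr (hrm.trans (min_le_left _ _)))

theorem hausdorffMeasure_eq_zero_of_le_measure_ball [ν.OuterRegular] (hd : 0 ≤ d) (hc : 0 < c)
    (hr₀ : 0 < r₀) (hA : ν A = 0)
    (hlow : ∀ x ∈ A, ∀ r, 0 < r → r ≤ r₀ → ENNReal.ofReal (c * r ^ d) ≤ ν (ball x r)) :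
    μH[d] A = 0 := by
  have hK : ENNReal.ofReal (4 ^ d / c) ≠ 0 := (ENNReal.ofReal_pos.2 (by positivity)).ne'
  have hle : μH[d] A ≤ ENNReal.ofReal (4 ^ d / c) * ν A := by
    simp only [Set.measure_eq_iInf_isOpen A ν, ENNReal.mul_iInf_of_ne hK ENNReal.ofReal_ne_top,
      le_iInf_iff]
    exact fun U hAU hU => hausdorffMeasure_le_of_le_measure_ball_of_isOpen hd hc hr₀ hU hAU hlow
  simpa [hA] using hle

end LowerDensity

section DensityMeasurability

variable {X : Type*} [PseudoMetricSpace X] [MeasurableSpace X] [OpensMeasurableSpace X]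
  {μ : Measure X}

lemma dist_measureReal_inter_ball_le [ProperSpace X] [IsFiniteMeasureOnCompacts μ] (W : Set X)
    (x : X) (a b : ℝ) :
    dist (μ.real (W ∩ ball x a)) (μ.real (W ∩ ball x b))
      ≤ dist (μ.real (ball x a)) (μ.real (ball x b)) := by
  wlog hab : a ≤ b generalizing a b
  · rw [dist_comm, dist_comm (μ.real (ball x a))]
    exact this b a (le_of_not_ge hab)
  have hsub : ball x a ⊆ ball x b := ball_subset_ball hab
  have hfin {s : Set X} (hs : s ⊆ ball x b) : μ s ≠ ⊤ :=
    ((measure_mono hs).trans_lt measure_ball_lt_top).ne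
  have hW : μ.real (W ∩ ball x b) ≤ μ.real (W ∩ ball x a) + μ.real (ball x b \ ball x a) := by
    refine (measureReal_mono (s₂ := W ∩ ball x a ∪ ball x b \ ball x a) (fun z hz => ?_)
      (hfin (union_subset (inter_subset_right.trans hsub) sdiff_subset))).trans
        (measureReal_union_le _ _)
    by_cases hza : z ∈ ball x a
    exacts [Or.inl ⟨hz.1, hza⟩, Or.inr ⟨hz.2, hza⟩]
  rw [measureReal_sdiff hsub measurableSet_ball (hfin subset_rfl)] at hW
  have hWab : μ.real (W ∩ ball x a) ≤ μ.real (W ∩ ball x b) :=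
    measureReal_mono (inter_subset_inter_right _ hsub) (hfin inter_subset_right)
  have hab' : μ.real (ball x a) ≤ μ.real (ball x b) := measureReal_mono hsub (hfin subset_rfl)
  rw [Real.dist_eq, Real.dist_eq, abs_sub_comm, abs_of_nonneg (by linarith), abs_sub_comm,
    abs_of_nonneg (by linarith)]
  linarith

lemma continuousAt_measureReal_inter_ball [ProperSpace X] [IsFiniteMeasureOnCompacts μ]
    (W : Set X) (x : X) {r : ℝ} (h : ContinuousAt (fun r => μ.real (ball x r)) r) :
    ContinuousAt (fun r => μ.real (W ∩ ball x r)) r := by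
  rw [Metric.continuousAt_iff] at h ⊢
  intro ε hε
  obtain ⟨δ, hδ, hball⟩ := h ε hε
  exact ⟨δ, hδ, fun _ hr => (dist_measureReal_inter_ball_le W x _ _).trans_lt (hball hr)⟩

lemma measurable_measure_inter_ball [SecondCountableTopology X] [SFinite μ] (W : Set X) (r : ℝ) :
    Measurable fun x => μ (W ∩ ball x r) := by
  have hS : MeasurableSet {p : X × X | p.2 ∈ toMeasurable μ W ∧ dist p.2 p.1 < r} :=
    (measurable_snd (measurableSet_toMeasurable μ W)).inter
      (measurableSet_lt (measurable_snd.dist measurable_fst) measurable_const)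
  convert measurable_measure_prodMk_left (ν := μ) hS using 2 with x
  rw [← Measure.measure_toMeasurable_inter_of_sFinite measurableSet_ball]
  rfl

end DensityMeasurability

lemma continuousAt_addHaar_measureReal_ball {E : Type*} [NormedAddCommGroup E]
    [NormedSpace ℝ E] [MeasurableSpace E] [BorelSpace E] [FiniteDimensional ℝ E] (μ : Measure E)
    [μ.IsAddHaarMeasure] (x : E) {r : ℝ} (hr : 0 < r) :
    ContinuousAt (fun r => μ.real (ball x r)) r := by
  have heq : (fun s => μ.real (ball 0 1) * s ^ Module.finrank ℝ E) =ᶠ[𝓝 r]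
      fun s => μ.real (ball x s) := by
    filter_upwards [lt_mem_nhds hr] with s hs
    rw [measureReal_def, measureReal_def, Measure.addHaar_ball_of_pos μ x hs, ENNReal.toReal_mul,
      ENNReal.toReal_ofReal (by positivity), mul_comm]
  exact (by fun_prop : ContinuousAt (fun s => μ.real (ball 0 1) * s ^ Module.finrank ℝ E) r).congr
    heq

lemma tendsto_nhdsGT_iff_ratCast {β : Type*} [TopologicalSpace β] [RegularSpace β] {φ : ℝ → β}
    {a : ℝ} {c : β} (hφ : ∀ r > a, ContinuousAt φ r) :
    Tendsto φ (𝓝[>] a) (𝓝 c) ↔ Tendsto (fun q : ℚ => φ q) (comap (↑) (𝓝[>] a)) (𝓝 c) := by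
  refine ⟨fun h => h.comp tendsto_comap, fun h => ?_⟩
  rw [(closed_nhds_basis c).tendsto_right_iff]
  rintro V ⟨hV, hVc⟩
  obtain ⟨t, ht, htV⟩ := mem_comap.1 (h hV)
  obtain ⟨b, hab, hbt⟩ := mem_nhdsGT_iff_exists_Ioo_subset.1 ht
  filter_upwards [Ioo_mem_nhdsGT hab] with r hr
  have hr' : r ∈ closure (Ioo a b ∩ range ((↑) : ℚ → ℝ)) :=
    Dense.open_subset_closure_inter Rat.denseRange_cast isOpen_Ioo hr
  refine hVc.closure_subset_iff.2 ?_ ((hφ r hr.1).continuousWithinAt.mem_closure_image hr')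
  rintro _ ⟨_, ⟨hq, q, rfl⟩, rfl⟩
  exact htV (hbt hq)

section ReducedBoundary

variable {n : ℕ}

lemma measurableSet_densTo (W : Set (EuclideanSpace ℝ (Fin n))) (c : ℝ) :
    MeasurableSet {x | densTo W x c} := by
  set F : ℝ → EuclideanSpace ℝ (Fin n) → ℝ :=
    fun r x => volume.real (W ∩ ball x r) / volume.real (ball x r)
  have hcont (x : EuclideanSpace ℝ (Fin n)) (r : ℝ) (hr : 0 < r) : ContinuousAt (F · x) r := by
    have hball := continuousAt_addHaar_measureReal_ball volume x hr
    exact (continuousAt_measureReal_inter_ball W x hball).div hball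
      (ENNReal.toReal_pos (measure_ball_pos volume x hr).ne' measure_ball_lt_top.ne).ne'
  have hset : {x | densTo W x c}
      = {x | Tendsto (fun q : ℚ => F q x) (comap ((↑) : ℚ → ℝ) (𝓝[>] 0)) (𝓝 c)} := by
    ext x
    exact tendsto_nhdsGT_iff_ratCast (hcont x)
  rw [hset]
  refine measurableSet_tendsto _ fun q => ?_
  have hball := measurable_measure_inter_ball (μ := volume)
    (univ : Set (EuclideanSpace ℝ (Fin n))) q
  simp only [univ_inter] at hball
  exact (measurable_measure_inter_ball W q).ennreal_toReal.div hball.ennreal_toReal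

lemma measurableSet_redBdry {Ω : Set (EuclideanSpace ℝ (Fin n))} (hΩ : MeasurableSet Ω)
    (W : Set (EuclideanSpace ℝ (Fin n))) : MeasurableSet (redBdry Ω W) :=
  hΩ.inter ((measurableSet_densTo W 0).compl.inter (measurableSet_densTo W 1).compl)

lemma measurableSet_totBdry {Ω : Set (EuclideanSpace ℝ (Fin n))} (hΩ : MeasurableSet Ω) {N : ℕ}
    (W : Fin N → Set (EuclideanSpace ℝ (Fin n))) : MeasurableSet (totBdry Ω W) :=
  .iUnion fun i => measurableSet_redBdry hΩ (W i)

end ReducedBoundary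

section AhlforsRegular

variable {X : Type*} [MetricSpace X] [MeasurableSpace X] [BorelSpace X]

def LocallyAhlforsRegular (d : ℝ) (Ω E : Set X) : Prop :=
  ∀ K : Set X, IsCompact K → K ⊆ Ω → ∃ C : ℝ, 1 ≤ C ∧ ∀ (x : X) (r : ℝ), x ∈ E ∩ K → 0 < r → r ≤ 1 →
    ENNReal.ofReal (C⁻¹ * r ^ d) ≤ μH[d] (E ∩ ball x r) ∧
      μH[d] (E ∩ ball x r) ≤ ENNReal.ofReal (C * r ^ d)

variable [ProperSpace X] {d : ℝ} {Ω E : Set X}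

lemma LocallyAhlforsRegular.exists_hausdorffMeasure_closure_diff_inter_ball_eq_zero
    (hE : LocallyAhlforsRegular d Ω E) (hd : 0 ≤ d) (hΩ : IsOpen Ω) (hEm : MeasurableSet E)
    {x₀ : X} (hx₀ : x₀ ∈ Ω) : ∃ ρ > 0, μH[d] ((closure E \ E) ∩ ball x₀ ρ) = 0 := by
  obtain ⟨ρ', hρ', hρ'Ω⟩ := isOpen_iff.1 hΩ x₀ hx₀
  set ρ := min (ρ' / 4) (1 / 4)
  have hρ : 0 < ρ := by positivity
  have hρρ' : ρ ≤ ρ' / 4 := min_le_left _ _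
  have hρ1 : ρ ≤ 1 / 4 := min_le_right _ _
  obtain ⟨C, hC1, hC⟩ := hE (closedBall x₀ (2 * ρ)) (isCompact_closedBall _ _)
    ((closedBall_subset_ball (by linarith)).trans hρ'Ω)
  set ν := μH[d].restrict (E ∩ ball x₀ (2 * ρ))
  have : IsFiniteMeasure ν := by
    refine ⟨?_⟩
    rw [Measure.restrict_apply_univ]
    rcases (E ∩ ball x₀ (2 * ρ)).eq_empty_or_nonempty with hempty | ⟨e, heE, he⟩
    · simp [hempty]
    have hsub : E ∩ ball x₀ (2 * ρ) ⊆ E ∩ ball e (4 * ρ) := by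
      rintro z ⟨hzE, hz⟩
      rw [mem_ball] at he hz
      exact ⟨hzE, by rw [mem_ball]; linarith [dist_triangle_right z e x₀]⟩
    exact (measure_mono hsub).trans_lt ((hC e (4 * ρ) ⟨heE, ball_subset_closedBall he⟩
      (by positivity) (by linarith)).2.trans_lt ENNReal.ofReal_lt_top)
  refine ⟨ρ, hρ, hausdorffMeasure_eq_zero_of_le_measure_ball (ν := ν) hd
    (c := C⁻¹ * (1 / 2) ^ d) (by positivity) hρ ?_ ?_⟩
  · rw [Measure.restrict_apply ((isClosed_closure.measurableSet.diff hEm).inter measurableSet_ball)]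
    exact measure_mono_null (fun z hz => hz.1.1.2 hz.2.1) measure_empty
  · rintro x ⟨⟨hxE, -⟩, hx⟩ r hr hrρ
    obtain ⟨e, heE, hxe⟩ := Metric.mem_closure_iff.1 hxE (r / 2) (by positivity)
    rw [mem_ball] at hx
    have he : e ∈ E ∩ closedBall x₀ (2 * ρ) :=
      ⟨heE, by rw [mem_closedBall]; linarith [dist_triangle_left e x₀ x]⟩
    have hsub : E ∩ ball e (r / 2) ⊆ ball x r ∩ (E ∩ ball x₀ (2 * ρ)) := by
      rintro z ⟨hzE, hz⟩
      rw [mem_ball] at hz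
      refine ⟨?_, hzE, ?_⟩ <;> rw [mem_ball] <;>
        linarith [dist_triangle z e x, dist_triangle z x x₀, dist_comm x e]
    calc ENNReal.ofReal (C⁻¹ * (1 / 2) ^ d * r ^ d) = ENNReal.ofReal (C⁻¹ * (r / 2) ^ d) := by
          rw [mul_assoc, ← Real.mul_rpow (by norm_num) hr.le, one_div_mul_eq_div]
      _ ≤ μH[d] (E ∩ ball e (r / 2)) := (hC e (r / 2) he (by positivity) (by linarith)).1
      _ ≤ ν (ball x r) := by
          rw [Measure.restrict_apply measurableSet_ball]
          exact measure_mono hsub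

theorem LocallyAhlforsRegular.hausdorffMeasure_inter_closure_diff_eq_zero
    (hE : LocallyAhlforsRegular d Ω E) (hd : 0 ≤ d) (hΩ : IsOpen Ω) (hEm : MeasurableSet E) :
    μH[d] ((Ω ∩ closure E) \ E) = 0 := by
  refine measure_null_of_locally_null _ fun x hx => ?_
  obtain ⟨ρ, hρ, hnull⟩ :=
    hE.exists_hausdorffMeasure_closure_diff_inter_ball_eq_zero hd hΩ hEm hx.1.1
  exact ⟨_, inter_mem_nhdsWithin _ (ball_mem_nhds x hρ),
    measure_mono_null (fun z hz => (⟨⟨hz.1.1.2, hz.1.2⟩, hz.2⟩ : z ∈ (closure E \ E) ∩ ball x ρ))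
      hnull⟩

end AhlforsRegular

theorem stmt8_general {n N : ℕ} (Ω : Set (EuclideanSpace ℝ (Fin n)))
    (hΩo : IsOpen Ω)
    (W : Fin N → Set (EuclideanSpace ℝ (Fin n)))
    (hAR : ∀ K : Set (EuclideanSpace ℝ (Fin n)), IsCompact K → K ⊆ Ω →
      ∃ CK : ℝ, 1 ≤ CK ∧ ∀ (x : EuclideanSpace ℝ (Fin n)) (r : ℝ),
        x ∈ totBdry Ω W ∩ K → 0 < r → r ≤ 1 →
          ENNReal.ofReal (CK⁻¹ * r ^ ((n : ℝ) - 1))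
              ≤ μH[(n : ℝ) - 1] (totBdry Ω W ∩ ball x r) ∧
            μH[(n : ℝ) - 1] (totBdry Ω W ∩ ball x r)
              ≤ ENNReal.ofReal (CK * r ^ ((n : ℝ) - 1))) :
    μH[(n : ℝ) - 1] ((Ω ∩ closure (totBdry Ω W)) \ totBdry Ω W) = 0 := by
  rcases Nat.eq_zero_or_pos n with rfl | hn
  · rw [(Subsingleton.isClosed subsingleton_of_subsingleton).closure_eq,
      sdiff_eq_empty.2 inter_subset_right, measure_empty]
  · exact LocallyAhlforsRegular.hausdorffMeasure_inter_closure_diff_eq_zero hAR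
      (sub_nonneg.2 (Nat.one_le_cast.2 hn)) hΩo (measurableSet_totBdry hΩo.measurableSet W)

/-- Proposition 5.1, (5.5): if the total reduced boundary
`∂*(W)` is locally Ahlfors regular of dimension `n-1` in `Ω`, then its
closure in `Ω` adds only an `H^{n-1}`-null set. -/
theorem stmt8 {n N : ℕ} (hN : 1 ≤ N) (Ω : Set (EuclideanSpace ℝ (Fin n)))
    (hΩo : IsOpen Ω) (hΩb : Bornology.IsBounded Ω)
    (W : Fin N → Set (EuclideanSpace ℝ (Fin n))) (hW : FwClass Ω W)
    (hAR : ∀ K : Set (EuclideanSpace ℝ (Fin n)), IsCompact K → K ⊆ Ω →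
      ∃ CK : ℝ, 1 ≤ CK ∧ ∀ (x : EuclideanSpace ℝ (Fin n)) (r : ℝ),
        x ∈ totBdry Ω W ∩ K → 0 < r → r ≤ 1 →
          ENNReal.ofReal (CK⁻¹ * r ^ ((n : ℝ) - 1))
              ≤ μH[(n : ℝ) - 1] (totBdry Ω W ∩ ball x r) ∧
            μH[(n : ℝ) - 1] (totBdry Ω W ∩ ball x r)
              ≤ ENNReal.ofReal (CK * r ^ ((n : ℝ) - 1))) :
    μH[(n : ℝ) - 1] ((Ω ∩ closure (totBdry Ω W)) \ totBdry Ω W) = 0 :=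
  stmt8_general Ω hΩo W hAR
end
end

section
/- Let W = (W_1,…,W_N) ∈ F_w(Ω) be such that for every compact set K ⊂ Ω there is a constant C_K ≥ 1 with C_K^{−1} r^{n−1} ≤ H^{n−1}(∂*W_i ∩ B(x,r)) ≤ C_K r^{n−1} for every i, every x ∈ ∂*W_i ∩ K, and 0 < r ≤ 1. Then there exist open sets W_i^♯ ⊂ Ω, 1 ≤ i ≤ N, such that: (i) |W_i Δ W_i^♯| = 0 for each i (Lebesgue equivalence); (ii) Ω ∩ ∂W_i^♯ = Ω ∩ cl(∂*W_i) for each i, where ∂ denotes topological boundary and cl topological closure; and (iii) the W_i^♯ are pairwise disjoint and Ω \ cl(∂*(W)) is their disjoint union, where ∂*(W) = ∪_i ∂*W_i. -/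
open MeasureTheory Metric Set Filter
open scoped ENNReal symmDiff

noncomputable section

namespace Stmt9Aux

variable {n : ℕ}

local notation "E" => EuclideanSpace ℝ (Fin n)

/-- The real density ratio. -/
def dratio (A : Set E) (x : E) (r : ℝ) : ℝ :=
  (volume (A ∩ ball x r)).toReal / (volume (ball x r)).toReal

lemma densTo_iff {A : Set E} {x : E} {d : ℝ} :
    densTo A x d ↔ Tendsto (dratio A x) (nhdsWithin 0 (Ioi 0)) (nhds d) := Iff.rfl

/-- normalizing constant -/
def cR (n : ℕ) : ℝ := (volume (ball (0 : EuclideanSpace ℝ (Fin n)) 1)).toReal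

lemma volBall_ne_top (x : E) (r : ℝ) : volume (ball x r) ≠ ⊤ :=
  measure_ball_lt_top.ne

lemma volBall_pos (x : E) {r : ℝ} (hr : 0 < r) : 0 < volume (ball x r) :=
  measure_ball_pos volume x hr

lemma cR_pos : 0 < cR n :=
  ENNReal.toReal_pos (volBall_pos 0 one_pos).ne' (volBall_ne_top 0 1)

lemma volBall_eq (x : E) {r : ℝ} (hr : 0 < r) :
    volume (ball x r) = ENNReal.ofReal (r ^ n) * volume (ball (0 : E) 1) := by
  rw [Measure.addHaar_ball_of_pos volume x hr, finrank_euclideanSpace_fin]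

lemma volBall_toReal (x : E) {r : ℝ} (hr : 0 < r) :
    (volume (ball x r)).toReal = r ^ n * cR n := by
  rw [volBall_eq x hr, ENNReal.toReal_mul, ENNReal.toReal_ofReal (by positivity)]; rfl

lemma volBall_toReal_pos (x : E) {r : ℝ} (hr : 0 < r) :
    0 < (volume (ball x r)).toReal :=
  ENNReal.toReal_pos (volBall_pos x hr).ne' (volBall_ne_top x r)

lemma dratio_nonneg {A : Set E} {x : E} {r : ℝ} : 0 ≤ dratio A x r := by
  unfold dratio; positivity

lemma dratio_le_one {A : Set E} {x : E} {r : ℝ} : dratio A x r ≤ 1 := by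
  unfold dratio
  rcases le_or_gt r 0 with h | h
  · simp [Metric.ball_eq_empty.2 h]
  · exact div_le_one_of_le₀
      (ENNReal.toReal_mono (volBall_ne_top x r) (measure_mono inter_subset_right))
      ENNReal.toReal_nonneg

lemma vol_inter_toReal {A : Set E} (hA : MeasurableSet A) (x : E) (r : ℝ) :
    (volume (ball x r \ A)).toReal
      = (volume (ball x r)).toReal - (volume (A ∩ ball x r)).toReal := by
  have h := measure_inter_add_diff (μ := volume) (ball x r) hA
  have h1 : volume (ball x r ∩ A) ≠ ⊤ :=
    (lt_of_le_of_lt (measure_mono inter_subset_left) measure_ball_lt_top).ne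
  have h2 : volume (ball x r \ A) ≠ ⊤ :=
    (lt_of_le_of_lt (measure_mono diff_subset) measure_ball_lt_top).ne
  have := congrArg ENNReal.toReal h
  rw [ENNReal.toReal_add h1 h2] at this
  rw [inter_comm A (ball x r), ← this]; ring

lemma dratio_eq_one_sub {A : Set E} (hA : MeasurableSet A) (x : E) {r : ℝ} (hr : 0 < r) :
    dratio Aᶜ x r = 1 - dratio A x r := by
  have hc : Aᶜ ∩ ball x r = ball x r \ A := by rw [diff_eq, inter_comm]
  rw [dratio, dratio, hc, vol_inter_toReal hA, sub_div,
    div_self (volBall_toReal_pos x hr).ne']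

lemma densTo_compl {A : Set E} (hA : MeasurableSet A) {x : E} {d : ℝ} (h : densTo A x d) :
    densTo Aᶜ x (1 - d) := by
  rw [densTo_iff]
  have : Tendsto (fun r => 1 - dratio A x r) (nhdsWithin 0 (Ioi 0)) (nhds (1 - d)) :=
    tendsto_const_nhds.sub h
  refine this.congr' ?_
  filter_upwards [self_mem_nhdsWithin] with r hr
  exact (dratio_eq_one_sub hA x hr).symm

lemma densTo_one_of_null {A : Set E} {x : E} {ε : ℝ} (hε : 0 < ε)
    (h : volume (ball x ε \ A) = 0) : densTo A x 1 := by
  rw [densTo_iff]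
  refine tendsto_const_nhds.congr' ?_
  filter_upwards [Ioc_mem_nhdsGT_of_mem ⟨le_refl (0:ℝ), hε⟩] with r hr
  have hsub : ball x r \ A ⊆ ball x ε \ A :=
    diff_subset_diff_left (ball_subset_ball hr.2)
  have h0 : volume (ball x r \ A) = 0 := measure_mono_null hsub h
  have : volume (A ∩ ball x r) = volume (ball x r) := by
    refine le_antisymm (measure_mono inter_subset_right) ?_
    calc volume (ball x r) ≤ volume (A ∩ ball x r) + volume (ball x r \ A) := by
          refine le_trans (measure_mono ?_) (measure_union_le _ _)
          intro y hy
          by_cases hyA : y ∈ A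
          · exact Or.inl ⟨hyA, hy⟩
          · exact Or.inr ⟨hy, hyA⟩
      _ = volume (A ∩ ball x r) := by rw [h0, add_zero]
  rw [dratio, this, div_self (volBall_toReal_pos x hr.1).ne']

lemma densTo_zero_of_null {A : Set E} {x : E} {ε : ℝ} (hε : 0 < ε)
    (h : volume (A ∩ ball x ε) = 0) : densTo A x 0 := by
  rw [densTo_iff]
  refine tendsto_const_nhds.congr' ?_
  filter_upwards [Ioc_mem_nhdsGT_of_mem ⟨le_refl (0:ℝ), hε⟩] with r hr
  have h0 : volume (A ∩ ball x r) = 0 :=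
    measure_mono_null (inter_subset_inter_right A (ball_subset_ball hr.2)) h
  rw [dratio, h0]; simp

lemma densTo_unique {A : Set E} {x : E} {d d' : ℝ} (h : densTo A x d) (h' : densTo A x d') :
    d = d' := tendsto_nhds_unique h h'

lemma not_densTo_zero_pos {A : Set E} {x : E} (h : ¬ densTo A x 0) {r : ℝ} (hr : 0 < r) :
    0 < volume (A ∩ ball x r) := by
  rcases eq_or_ne (volume (A ∩ ball x r)) 0 with h0 | h0
  · exact absurd (densTo_zero_of_null hr h0) h
  · exact h0.bot_lt

lemma not_densTo_one_pos {A : Set E} {x : E} (h : ¬ densTo A x 1) {r : ℝ} (hr : 0 < r) :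
    0 < volume (ball x r \ A) := by
  rcases eq_or_ne (volume (ball x r \ A)) 0 with h0 | h0
  · exact absurd (densTo_one_of_null hr h0) h
  · exact h0.bot_lt

lemma exists_point {P : E → Prop} (hae : ∀ᵐ x : E, P x) {S : Set E}
    (hS : 0 < volume S) : ∃ x ∈ S, P x := by
  by_contra hcon
  push_neg at hcon
  have : S ⊆ {x | ¬ P x} := fun x hx => hcon x hx
  have := measure_mono_null this hae
  exact absurd this hS.ne'

lemma volBall_scale (a : E) {θ : ℝ} (hθ : 0 < θ) (s : ℝ) :
    volume (ball a (θ * s)) = ENNReal.ofReal (θ ^ n) * volume (ball a s) := by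
  rw [Measure.addHaar_ball_mul_of_pos volume a hθ s, finrank_euclideanSpace_fin,
    Measure.addHaar_ball_center volume a s]

lemma volInter_le {A : Set E} (x z : E) {s : ℝ} (hs : 0 < s) :
    (volume (A ∩ ball x s)).toReal
      ≤ (volume (A ∩ ball z s)).toReal + ((s + dist x z) ^ n - s ^ n) * cR n := by
  have hsub : ball x s ⊆ ball z (s + dist x z) := ball_subset_ball' le_rfl
  have h1 : A ∩ ball x s ⊆ (A ∩ ball z s) ∪ (ball z (s + dist x z) \ ball z s) := by
    rintro w ⟨hwA, hw⟩
    by_cases hwz : w ∈ ball z s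
    · exact Or.inl ⟨hwA, hwz⟩
    · exact Or.inr ⟨hsub hw, hwz⟩
  have hdiff : (volume (ball z (s + dist x z) \ ball z s)).toReal
      = ((s + dist x z) ^ n - s ^ n) * cR n := by
    have hle : ball z s ⊆ ball z (s + dist x z) :=
      ball_subset_ball (by linarith [dist_nonneg (x := x) (y := z)])
    rw [measure_diff hle measurableSet_ball.nullMeasurableSet (measure_ball_lt_top).ne,
      ENNReal.toReal_sub_of_le (measure_mono hle) measure_ball_lt_top.ne,
      volBall_toReal z (by linarith [dist_nonneg (x := x) (y := z)]), volBall_toReal z hs]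
    ring
  calc (volume (A ∩ ball x s)).toReal
      ≤ (volume ((A ∩ ball z s) ∪ (ball z (s + dist x z) \ ball z s))).toReal := by
        apply ENNReal.toReal_mono _ (measure_mono h1)
        exact ((measure_union_le _ _).trans_lt
          (ENNReal.add_lt_top.2 ⟨(measure_mono inter_subset_right).trans_lt measure_ball_lt_top,
            (measure_mono diff_subset).trans_lt measure_ball_lt_top⟩)).ne
    _ ≤ (volume (A ∩ ball z s)).toReal + (volume (ball z (s + dist x z) \ ball z s)).toReal := by
        rw [← ENNReal.toReal_add
          ((measure_mono inter_subset_right).trans_lt measure_ball_lt_top).ne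
          ((measure_mono diff_subset).trans_lt measure_ball_lt_top).ne]
        exact ENNReal.toReal_mono
          (ENNReal.add_ne_top.2 ⟨((measure_mono inter_subset_right).trans_lt measure_ball_lt_top).ne,
            ((measure_mono diff_subset).trans_lt measure_ball_lt_top).ne⟩)
          (measure_union_le _ _)
    _ = _ := by rw [hdiff]

lemma cont_volInter (A : Set E) {s : ℝ} (hs : 0 < s) :
    Continuous fun x : E => (volume (A ∩ ball x s)).toReal := by
  rw [continuous_iff_continuousAt]
  intro z
  set F : E → ℝ := fun x => (volume (A ∩ ball x s)).toReal with hF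
  have hb : ∀ x : E, |F x - F z| ≤ ((s + dist x z) ^ n - s ^ n) * cR n := by
    intro x
    rw [abs_sub_le_iff]
    constructor
    · linarith [volInter_le (A := A) x z hs]
    · have := volInter_le (A := A) z x hs
      rw [dist_comm z x] at this
      linarith
  have hg : Tendsto (fun x : E => ((s + dist x z) ^ n - s ^ n) * cR n) (nhds z) (nhds 0) := by
    have hc : Continuous fun x : E => ((s + dist x z) ^ n - s ^ n) * cR n := by
      have : Continuous fun x : E => dist x z := continuous_id.dist continuous_const
      continuity
    have h0 : ((s + dist z z) ^ n - s ^ n) * cR n = 0 := by simp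
    simpa [h0] using hc.tendsto z
  rw [ContinuousAt, tendsto_iff_dist_tendsto_zero]
  refine squeeze_zero (fun x => dist_nonneg) (fun x => ?_) hg
  rw [Real.dist_eq]; exact hb x

lemma dratio_cont (A : Set E) {s : ℝ} (hs : 0 < s) :
    Continuous fun x : E => dratio A x s := by
  have h : ∀ x : E, dratio A x s = (volume (A ∩ ball x s)).toReal / (s ^ n * cR n) := by
    intro x; rw [dratio, volBall_toReal x hs]
  simp_rw [h]
  exact (cont_volInter A hs).div_const _

lemma strong_one {A : Set E} {a : E}
    (ht : Tendsto (fun r => volume (A ∩ closedBall a r) / volume (closedBall a r))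
      (nhdsWithin 0 (Ioi 0)) (nhds 1)) {c : ℝ} (hc : c < 1) :
    ∀ᶠ s in nhdsWithin (0:ℝ) (Ioi 0), c < dratio A a s := by
  rcases lt_or_ge c 0 with hc0 | hc0
  · exact Eventually.of_forall fun s => lt_of_lt_of_le hc0 dratio_nonneg
  obtain ⟨θ, hθ0, hθ1, hθc⟩ : ∃ θ : ℝ, 0 < θ ∧ θ < 1 ∧ c < θ ^ (n + 1) := by
    have h1 : Tendsto (fun θ : ℝ => θ ^ (n + 1)) (nhdsWithin 1 (Iio 1)) (nhds 1) := by
      have := (continuous_pow (n + 1)).tendsto (1 : ℝ)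
      simpa using this.mono_left nhdsWithin_le_nhds
    have h2 : ∀ᶠ θ in nhdsWithin (1:ℝ) (Iio 1), c < θ ^ (n + 1) :=
      h1.eventually (isOpen_Ioi.eventually_mem (by simpa using hc))
    have h3 : ∀ᶠ θ in nhdsWithin (1:ℝ) (Iio 1), θ ∈ Ioo (0:ℝ) 1 :=
      eventually_of_mem (Ioo_mem_nhdsLT_of_mem ⟨zero_lt_one, le_rfl⟩) (fun θ hθ => hθ)
    obtain ⟨θ, hθc, hθoo⟩ := (h2.and h3).exists
    exact ⟨θ, hθoo.1, hθoo.2, hθc⟩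
  have hofθ : ENNReal.ofReal θ < 1 := ENNReal.ofReal_lt_one.2 hθ1
  have hev1 : ∀ᶠ r in nhdsWithin (0:ℝ) (Ioi 0),
      ENNReal.ofReal θ < volume (A ∩ closedBall a r) / volume (closedBall a r) :=
    ht.eventually (isOpen_Ioi.eventually_mem hofθ)
  have hmap : Tendsto (fun s : ℝ => θ * s) (nhdsWithin 0 (Ioi 0)) (nhdsWithin 0 (Ioi 0)) := by
    apply tendsto_nhdsWithin_of_tendsto_nhds_of_eventually_within
    · have : Tendsto (fun s : ℝ => θ * s) (nhds 0) (nhds (θ * 0)) :=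
        (continuous_const.mul continuous_id).tendsto 0
      simpa using this.mono_left nhdsWithin_le_nhds
    · filter_upwards [self_mem_nhdsWithin] with s hs
      exact mul_pos hθ0 hs
  filter_upwards [hmap.eventually hev1, self_mem_nhdsWithin] with s hratio hs
  have hs : (0:ℝ) < s := hs
  have hθs : 0 < θ * s := mul_pos hθ0 hs
  have hθss : θ * s < s := by nlinarith
  have hcb_ne0 : volume (closedBall a (θ * s)) ≠ 0 :=
    ((volBall_pos a hθs).trans_le (measure_mono ball_subset_closedBall)).ne'
  have hcb_ne_top : volume (closedBall a (θ * s)) ≠ ⊤ := measure_closedBall_lt_top.ne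
  have h2 : ENNReal.ofReal θ * volume (closedBall a (θ * s))
      < volume (A ∩ closedBall a (θ * s)) :=
    (ENNReal.lt_div_iff_mul_lt (Or.inl hcb_ne0) (Or.inl hcb_ne_top)).1 hratio
  have hchain : ENNReal.ofReal (θ ^ (n + 1)) * volume (ball a s) < volume (A ∩ ball a s) := by
    calc ENNReal.ofReal (θ ^ (n + 1)) * volume (ball a s)
        = ENNReal.ofReal θ * (ENNReal.ofReal (θ ^ n) * volume (ball a s)) := by
          rw [← mul_assoc, ← ENNReal.ofReal_mul hθ0.le, ← pow_succ']
      _ = ENNReal.ofReal θ * volume (ball a (θ * s)) := by rw [volBall_scale a hθ0 s]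
      _ ≤ ENNReal.ofReal θ * volume (closedBall a (θ * s)) :=
          mul_le_mul_right (measure_mono ball_subset_closedBall) _
      _ < volume (A ∩ closedBall a (θ * s)) := h2
      _ ≤ volume (A ∩ ball a s) :=
          measure_mono (inter_subset_inter_right A (closedBall_subset_ball hθss))
  have hV := volBall_toReal_pos a hs
  have hXne : volume (A ∩ ball a s) ≠ ⊤ :=
    ((measure_mono inter_subset_right).trans_lt measure_ball_lt_top).ne
  have hreal : θ ^ (n + 1) * (volume (ball a s)).toReal < (volume (A ∩ ball a s)).toReal := by
    have := (ENNReal.toReal_lt_toReal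
      (ENNReal.mul_ne_top ENNReal.ofReal_ne_top (volBall_ne_top a s)) hXne).2 hchain
    rwa [ENNReal.toReal_mul, ENNReal.toReal_ofReal (by positivity)] at this
  refine lt_trans hθc ?_
  rw [dratio, lt_div_iff₀ hV]
  exact hreal

lemma strong_zero {A : Set E} {a : E}
    (ht : Tendsto (fun r => volume (A ∩ closedBall a r) / volume (closedBall a r))
      (nhdsWithin 0 (Ioi 0)) (nhds 0)) {c : ℝ} (hc : 0 < c) :
    ∀ᶠ s in nhdsWithin (0:ℝ) (Ioi 0), dratio A a s < c := by
  set ε' : ℝ := c / 2 ^ (n + 1) with hε'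
  have hε'pos : 0 < ε' := by positivity
  have hev1 : ∀ᶠ r in nhdsWithin (0:ℝ) (Ioi 0),
      volume (A ∩ closedBall a r) / volume (closedBall a r) < ENNReal.ofReal ε' :=
    ht.eventually (isOpen_Iio.eventually_mem (by simpa [ENNReal.ofReal_pos] using hε'pos))
  filter_upwards [hev1, self_mem_nhdsWithin] with r hr hrpos
  have hrpos : (0:ℝ) < r := hrpos
  have hcb_ne0 : volume (closedBall a r) ≠ 0 :=
    ((volBall_pos a hrpos).trans_le (measure_mono ball_subset_closedBall)).ne'
  have hcb_ne_top : volume (closedBall a r) ≠ ⊤ := measure_closedBall_lt_top.ne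
  have hlt : volume (A ∩ closedBall a r) < ENNReal.ofReal ε' * volume (closedBall a r) :=
    (ENNReal.div_lt_iff (Or.inl hcb_ne0) (Or.inl hcb_ne_top)).1 hr
  have hchain : volume (A ∩ ball a r)
      < ENNReal.ofReal ε' * (ENNReal.ofReal (2 ^ n) * volume (ball a r)) := by
    calc volume (A ∩ ball a r)
        ≤ volume (A ∩ closedBall a r) :=
          measure_mono (inter_subset_inter_right A ball_subset_closedBall)
      _ < ENNReal.ofReal ε' * volume (closedBall a r) := hlt
      _ ≤ ENNReal.ofReal ε' * volume (ball a (2 * r)) :=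
          mul_le_mul_right (measure_mono (closedBall_subset_ball (by linarith))) _
      _ = ENNReal.ofReal ε' * (ENNReal.ofReal (2 ^ n) * volume (ball a r)) := by
          rw [volBall_scale a two_pos r]
  have hV := volBall_toReal_pos a hrpos
  have hreal : (volume (A ∩ ball a r)).toReal < ε' * (2 ^ n * (volume (ball a r)).toReal) := by
    have := (ENNReal.toReal_lt_toReal
      ((measure_mono inter_subset_right).trans_lt measure_ball_lt_top).ne
      (ENNReal.mul_ne_top ENNReal.ofReal_ne_top
        (ENNReal.mul_ne_top ENNReal.ofReal_ne_top (volBall_ne_top a r)))).2 hchain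
    rwa [ENNReal.toReal_mul, ENNReal.toReal_mul, ENNReal.toReal_ofReal hε'pos.le,
      ENNReal.toReal_ofReal (by positivity)] at this
  have hlt2 : dratio A a r < ε' * 2 ^ n := by
    rw [dratio, div_lt_iff₀ hV]
    nlinarith
  calc dratio A a r < ε' * 2 ^ n := hlt2
    _ = c / 2 := by rw [hε']; field_simp; ring
    _ < c := by linarith

lemma ae_density {A : Set E} (hA : MeasurableSet A) :
    ∀ᵐ x : E,
      (x ∈ A → ∀ c : ℝ, c < 1 → ∀ᶠ s in nhdsWithin (0:ℝ) (Ioi 0), c < dratio A x s)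
        ∧ (x ∉ A → ∀ c : ℝ, 0 < c → ∀ᶠ s in nhdsWithin (0:ℝ) (Ioi 0), dratio A x s < c) := by
  filter_upwards [Besicovitch.ae_tendsto_measure_inter_div_of_measurableSet volume hA] with x hx
  constructor
  · intro hxA c hc
    rw [indicator_of_mem hxA] at hx
    exact strong_one (by simpa using hx) hc
  · intro hxA c hc
    rw [indicator_of_notMem hxA] at hx
    exact strong_zero (by simpa using hx) hc

lemma halves {A : Set E} (hA : MeasurableSet A) {y : E} {r : ℝ} (hr : 0 < r)
    (h : dratio A y r = 1 / 2) :
    0 < volume (A ∩ ball y r) ∧ 0 < volume (ball y r \ A) := by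
  have hV := volBall_toReal_pos y hr
  have hX : (volume (A ∩ ball y r)).toReal * 2 = 1 * (volume (ball y r)).toReal :=
    (div_eq_div_iff hV.ne' two_ne_zero).1 h
  constructor
  · rcases eq_or_ne (volume (A ∩ ball y r)) 0 with h0 | h0
    · rw [h0] at hX; simp at hX; linarith
    · exact h0.bot_lt
  · rcases eq_or_ne (volume (ball y r \ A)) 0 with h0 | h0
    · have hd := vol_inter_toReal hA y r
      rw [h0] at hd; simp at hd
      linarith
    · exact h0.bot_lt

lemma step {A : Set E} (hA : MeasurableSet A) {y : E} {r : ℝ} (hr : 0 < r)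
    (h1 : 0 < volume (A ∩ ball y r)) (h2 : 0 < volume (ball y r \ A)) :
    ∃ p : E × ℝ, 0 < p.2 ∧ p.2 ≤ r / 2 ∧ closedBall p.1 p.2 ⊆ ball y r ∧
      dratio A p.1 p.2 = 1 / 2 := by
  obtain ⟨a, haS, haP⟩ := exists_point (ae_density hA) h1
  obtain ⟨b, hbS, hbP⟩ := exists_point (ae_density hA) h2
  have ha := haP.1 haS.1 (1/2) (by norm_num)
  have hb := hbP.2 hbS.2 (1/2) (by norm_num)
  have hseg : segment ℝ a b ⊆ ball y r := (convex_ball y r).segment_subset haS.2 hbS.1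
  have hcompact : IsCompact (segment ℝ a b) := by
    rw [segment_eq_image_lineMap]
    exact isCompact_Icc.image (AffineMap.lineMap_continuous)
  obtain ⟨δ, hδpos, hthick⟩ := hcompact.exists_thickening_subset_open isOpen_ball hseg
  have hsmall : ∀ᶠ s in nhdsWithin (0:ℝ) (Ioi 0), s < min δ (r/2) :=
    eventually_nhdsWithin_of_eventually_nhds (eventually_lt_nhds (by positivity))
  obtain ⟨s, ⟨⟨hsa, hsb⟩, hsδ⟩, hs0'⟩ := (((ha.and hb).and hsmall).and self_mem_nhdsWithin).exists
  have hs0 : (0:ℝ) < s := hs0'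
  set g : ℝ → E := fun t => AffineMap.lineMap a b t with hg
  have hgc : Continuous fun t => dratio A (g t) s :=
    (dratio_cont A hs0).comp (AffineMap.lineMap_continuous)
  have hmem : (1:ℝ)/2 ∈ Icc (dratio A (g 1) s) (dratio A (g 0) s) := by
    rw [hg]
    simp only [AffineMap.lineMap_apply_zero, AffineMap.lineMap_apply_one]
    exact ⟨hsb.le, hsa.le⟩
  obtain ⟨t, ht01, htv⟩ := intermediate_value_Icc' (by norm_num : (0:ℝ) ≤ 1) hgc.continuousOn hmem
  have hgt : g t ∈ segment ℝ a b := by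
    rw [segment_eq_image_lineMap]; exact ⟨t, ht01, rfl⟩
  refine ⟨(g t, s), hs0, (lt_of_lt_of_le hsδ (min_le_right _ _)).le, ?_, htv⟩
  intro w hw
  apply hthick
  rw [mem_thickening_iff]
  exact ⟨g t, hgt, lt_of_le_of_lt (mem_closedBall.1 hw) (lt_of_lt_of_le hsδ (min_le_left _ _))⟩

lemma core {A V : Set E} (hA : MeasurableSet A) (hV : IsOpen V)
    (hdich : ∀ y ∈ V, densTo A y 0 ∨ densTo A y 1) {x : E} (hx : x ∈ V)
    (h1x : densTo A x 1) :
    ∃ ε > 0, ball x ε ⊆ V ∧ volume (ball x ε \ A) = 0 := by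
  obtain ⟨ε, hε, hball⟩ := Metric.isOpen_iff.1 hV x hx
  refine ⟨ε, hε, hball, ?_⟩
  by_contra hbad0
  have hbad : 0 < volume (ball x ε \ A) := pos_iff_ne_zero.2 hbad0
  have hnot0 : ¬ densTo A x 0 := fun h0 => by
    have := densTo_unique h0 h1x; norm_num at this
  have hpos : 0 < volume (A ∩ ball x ε) := not_densTo_zero_pos hnot0 hε
  set Q : EuclideanSpace ℝ (Fin n) × ℝ → Prop :=
    fun p => 0 < p.2 ∧ closedBall p.1 p.2 ⊆ ball x ε ∧ dratio A p.1 p.2 = 1/2 with hQdef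
  obtain ⟨p₀, hp₀pos, _, hp₀sub, hp₀half⟩ := step hA hε hpos hbad
  have hQ0 : Q p₀ := ⟨hp₀pos, hp₀sub, hp₀half⟩
  have hstepQ : ∀ p : EuclideanSpace ℝ (Fin n) × ℝ, Q p →
      ∃ q : EuclideanSpace ℝ (Fin n) × ℝ,
        Q q ∧ q.2 ≤ p.2 / 2 ∧ closedBall q.1 q.2 ⊆ ball p.1 p.2 := by
    rintro ⟨y, r⟩ ⟨hr, hsubp, hhalfp⟩
    obtain ⟨hpos1, hpos2⟩ := halves hA hr hhalfp
    obtain ⟨q, hq1, hq2, hq3, hq4⟩ := step hA hr hpos1 hpos2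
    exact ⟨q, ⟨hq1, hq3.trans (ball_subset_closedBall.trans hsubp), hq4⟩, hq2, hq3⟩
  choose! nxt hQn hhalfn hsubn using hstepQ
  set u : ℕ → EuclideanSpace ℝ (Fin n) × ℝ := fun k => Nat.rec p₀ (fun _ q => nxt q) k with hu
  have husucc : ∀ k, u (k+1) = nxt (u k) := fun k => rfl
  have hQu : ∀ k, Q (u k) := by
    intro k; induction k with
    | zero => exact hQ0
    | succ k ih => rw [husucc]; exact hQn (u k) ih
  have hrpos : ∀ k, 0 < (u k).2 := fun k => (hQu k).1
  have hhalf : ∀ k, (u (k+1)).2 ≤ (u k).2 / 2 := fun k => by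
    rw [husucc]; exact hhalfn (u k) (hQu k)
  have hsub : ∀ k, closedBall (u (k+1)).1 (u (k+1)).2 ⊆ ball (u k).1 (u k).2 := fun k => by
    rw [husucc]; exact hsubn (u k) (hQu k)
  have hgeo : ∀ k, (u k).2 ≤ (u 0).2 * (1/2) ^ k := by
    intro k; induction k with
    | zero => simp
    | succ k ih =>
      calc (u (k+1)).2 ≤ (u k).2 / 2 := hhalf k
        _ ≤ (u 0).2 * (1/2)^k / 2 := by linarith
        _ = (u 0).2 * (1/2)^(k+1) := by ring
  have hnest : ∀ k j, k ≤ j →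
      closedBall (u j).1 (u j).2 ⊆ closedBall (u k).1 (u k).2 := by
    intro k j hkj
    induction j, hkj using Nat.le_induction with
    | base => exact subset_rfl
    | succ j hkj ih => exact ((hsub j).trans ball_subset_closedBall).trans ih
  have hmemc : ∀ k, (u k).1 ∈ closedBall (u k).1 (u k).2 := fun k => mem_closedBall_self (hrpos k).le
  have hdist : ∀ k, dist ((u k).1) ((u (k+1)).1) ≤ (u 0).2 * (1/2)^k := by
    intro k
    have hmem : (u (k+1)).1 ∈ ball (u k).1 (u k).2 := hsub k (hmemc (k+1))
    rw [dist_comm]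
    exact (le_of_lt (mem_ball.1 hmem)).trans (hgeo k)
  have hcauchy : CauchySeq fun k => (u k).1 :=
    cauchySeq_of_le_geometric (1/2) ((u 0).2) (by norm_num) hdist
  obtain ⟨z, hz⟩ := cauchySeq_tendsto_of_complete hcauchy
  have hzmem : ∀ k, z ∈ closedBall (u k).1 (u k).2 := by
    intro k
    apply Metric.isClosed_closedBall.mem_of_tendsto hz
    filter_upwards [eventually_ge_atTop k] with j hj
    exact hnest k j hj (hmemc j)
  have hzV : z ∈ V := hball (hp₀sub (hzmem 0))
  set c₀ : ℝ := 1/2 * (1/2)^n with hc₀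
  have hc₀pos : 0 < c₀ := by positivity
  have hbound : ∀ k, c₀ ≤ dratio A z (2 * (u k).2) ∧ dratio A z (2 * (u k).2) ≤ 1 - c₀ := by
    intro k
    set r := (u k).2 with hrdef
    have hr : 0 < r := hrpos k
    have hbsub : ball (u k).1 r ⊆ ball z (2 * r) := by
      intro w hw
      have h1 : dist w (u k).1 < r := mem_ball.1 hw
      have h2 : dist z (u k).1 ≤ r := mem_closedBall.1 (hzmem k)
      have : dist w z < 2 * r := by
        calc dist w z ≤ dist w (u k).1 + dist (u k).1 z := dist_triangle _ _ _
          _ < r + r := by rw [dist_comm (u k).1 z]; exact add_lt_add_of_lt_of_le h1 h2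
          _ = 2*r := by ring
      exact mem_ball.2 this
    have hVk := volBall_toReal_pos (u k).1 hr
    have hV2 := volBall_toReal_pos z (by linarith : (0:ℝ) < 2 * r)
    have hhalfk : (volume (A ∩ ball (u k).1 r)).toReal * 2
        = 1 * (volume (ball (u k).1 r)).toReal :=
      (div_eq_div_iff hVk.ne' two_ne_zero).1 (hQu k).2.2
    have hVval : (volume (ball (u k).1 r)).toReal = r^n * cR n := volBall_toReal _ hr
    have hV2val : (volume (ball z (2*r))).toReal = (2*r)^n * cR n :=
      volBall_toReal _ (by linarith)
    have hpow : ((1:ℝ)/2)^n * (2*r)^n = r^n := by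
      rw [← mul_pow]; congr 1; ring
    have e1 : c₀ * ((2*r)^n * cR n) = (volume (A ∩ ball (u k).1 r)).toReal := by
      calc c₀ * ((2*r)^n * cR n) = 1/2 * ((((1:ℝ)/2)^n * (2*r)^n) * cR n) := by rw [hc₀]; ring
        _ = 1/2 * (r^n * cR n) := by rw [hpow]
        _ = (volume (A ∩ ball (u k).1 r)).toReal := by
            rw [← hVval]; linarith [hhalfk]
    have hlow : (volume (A ∩ ball (u k).1 r)).toReal ≤ (volume (A ∩ ball z (2*r))).toReal :=
      ENNReal.toReal_mono ((measure_mono inter_subset_right).trans_lt measure_ball_lt_top).ne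
        (measure_mono (inter_subset_inter_right A hbsub))
    have hdiffmono : (volume (ball (u k).1 r \ A)).toReal
        ≤ (volume (ball z (2*r) \ A)).toReal :=
      ENNReal.toReal_mono ((measure_mono diff_subset).trans_lt measure_ball_lt_top).ne
        (measure_mono (diff_subset_diff_left hbsub))
    have hd1 := vol_inter_toReal hA (u k).1 r
    have hd2 := vol_inter_toReal hA z (2*r)
    constructor
    · rw [dratio, le_div_iff₀ hV2, hV2val]
      linarith [e1, hlow]
    · rw [dratio, div_le_iff₀ hV2, hV2val]
      have expand : (1 - c₀) * ((2*r)^n * cR n)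
          = (2*r)^n * cR n - c₀ * ((2*r)^n * cR n) := by ring
      rw [expand]
      linarith [hd1, hd2, hdiffmono, e1, hhalfk, hVval, hV2val]
  have hrlim : Tendsto (fun k => 2 * (u k).2) atTop (nhdsWithin 0 (Ioi 0)) := by
    apply tendsto_nhdsWithin_of_tendsto_nhds_of_eventually_within
    · have h0 : Tendsto (fun k : ℕ => (u 0).2 * (1/2)^k) atTop (nhds 0) := by
        simpa using
          (tendsto_pow_atTop_nhds_zero_of_lt_one (by norm_num : (0:ℝ) ≤ 1/2)
            (by norm_num : (1:ℝ)/2 < 1)).const_mul ((u 0).2)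
      have hlim : Tendsto (fun k => (u k).2) atTop (nhds 0) :=
        squeeze_zero (fun k => (hrpos k).le) hgeo h0
      simpa using hlim.const_mul 2
    · exact Eventually.of_forall fun k => mul_pos two_pos (hrpos k)
  rcases hdich z hzV with h0 | h1
  · have hcomp := (densTo_iff.1 h0).comp hrlim
    have hle : c₀ ≤ 0 := ge_of_tendsto hcomp (Eventually.of_forall fun k => (hbound k).1)
    linarith
  · have hcomp := (densTo_iff.1 h1).comp hrlim
    have hle : (1:ℝ) ≤ 1 - c₀ := by
      have := le_of_tendsto hcomp (Eventually.of_forall fun k => (hbound k).2)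
      linarith
    linarith

lemma core_zero {A V : Set E} (hA : MeasurableSet A) (hV : IsOpen V)
    (hdich : ∀ y ∈ V, densTo A y 0 ∨ densTo A y 1) {x : E} (hx : x ∈ V)
    (h0x : densTo A x 0) :
    ∃ ε > 0, ball x ε ⊆ V ∧ volume (A ∩ ball x ε) = 0 := by
  have hdich' : ∀ y ∈ V, densTo Aᶜ y 0 ∨ densTo Aᶜ y 1 := by
    intro y hy
    rcases hdich y hy with h | h
    · right; simpa using densTo_compl hA h
    · left; simpa using densTo_compl hA h
  have h1x : densTo Aᶜ x 1 := by simpa using densTo_compl hA h0x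
  obtain ⟨ε, hε, hsubV, hnull⟩ := core hA.compl hV hdich' hx h1x
  refine ⟨ε, hε, hsubV, ?_⟩
  have hset : ball x ε \ Aᶜ = A ∩ ball x ε := by ext w; simp [and_comm]
  rwa [hset] at hnull

lemma volBall_ofReal (x : E) {r : ℝ} (hr : 0 < r) :
    volume (ball x r) = ENNReal.ofReal (r ^ n * cR n) := by
  rw [← ENNReal.ofReal_toReal (volBall_ne_top x r), volBall_toReal x hr]

lemma dich_of_n_eq_zero (hn : n = 0) (A : Set E) (x : E) :
    densTo A x 0 ∨ densTo A x 1 := by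
  subst hn
  have hsub : ∀ y z : EuclideanSpace ℝ (Fin 0), y = z := fun y z => PiLp.ext fun i => i.elim0
  rcases eq_empty_or_nonempty A with rfl | ⟨a, ha⟩
  · left; exact densTo_zero_of_null one_pos (by simp)
  · right
    have hAuniv : A = univ := eq_univ_of_forall fun y => (hsub y a) ▸ ha
    apply densTo_one_of_null (ε := 1) one_pos
    rw [hAuniv]; simp

lemma redBdry_eq_empty_of_n_eq_zero (hn : n = 0) (Ω A : Set E) : redBdry Ω A = ∅ := by
  ext x
  simp only [redBdry, mem_setOf_eq, mem_empty_iff_false, iff_false, not_and]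
  intro hxΩ h0
  rcases dich_of_n_eq_zero hn A x with h | h
  · exact absurd h h0
  · intro h1; exact h1 h

lemma closure_redBdry_null {Ω : Set E} (hΩo : IsOpen Ω) (hΩb : Bornology.IsBounded Ω)
    {A : Set E} (hfin : ∀ K : Set E, IsCompact K → K ⊆ Ω → perMeas Ω A K < ⊤)
    (hAR : ∀ K : Set E, IsCompact K → K ⊆ Ω →
      ∃ CK : ℝ, 1 ≤ CK ∧ ∀ (x : E) (r : ℝ),
        x ∈ redBdry Ω A ∩ K → 0 < r → r ≤ 1 →
          ENNReal.ofReal (CK⁻¹ * r ^ ((n : ℝ) - 1))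
            ≤ μH[(n : ℝ) - 1] (redBdry Ω A ∩ ball x r)) :
    volume (Ω ∩ closure (redBdry Ω A)) = 0 := by
  rcases Nat.eq_zero_or_pos n with hn | hn
  · rw [redBdry_eq_empty_of_n_eq_zero hn, closure_empty, inter_empty, measure_empty]
  obtain ⟨k, hk⟩ : ∃ k, n = k + 1 := ⟨n - 1, (Nat.succ_pred_eq_of_pos hn).symm⟩
  have hexp : ((n : ℝ) - 1) = (k : ℝ) := by rw [hk]; push_cast; ring
  -- Ωᶜ is nonempty
  have hcompl : Ωᶜ.Nonempty := by
    by_contra hc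
    rw [not_nonempty_iff_eq_empty, compl_empty_iff] at hc
    subst hc
    obtain ⟨R, hR⟩ := hΩb.subset_closedBall 0
    set v : E := EuclideanSpace.single (⟨0, hn⟩ : Fin n) (|R| + 1) with hv
    have hvnorm : ‖v‖ = |R| + 1 := by
      rw [hv, EuclideanSpace.norm_single]
      rw [Real.norm_eq_abs, abs_of_nonneg (by positivity)]
    have hvmem : v ∈ closedBall (0 : E) R := hR (mem_univ v)
    rw [mem_closedBall, dist_zero_right, hvnorm] at hvmem
    have := le_abs_self R
    linarith
  set S := closure (redBdry Ω A) with hS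
  set Km : ℕ → Set E := fun m => {x | 1/(m+1) ≤ infDist x Ωᶜ} ∩ closedBall 0 (m+1) with hKm
  have hcover : Ω ∩ S ⊆ ⋃ m, (Km m ∩ S) := by
    rintro x ⟨hxΩ, hxS⟩
    have hxpos : 0 < infDist x Ωᶜ :=
      (hΩo.isClosed_compl.notMem_iff_infDist_pos hcompl).1 (by simpa using hxΩ)
    obtain ⟨m1, hm1⟩ := exists_nat_one_div_lt hxpos
    obtain ⟨m2, hm2⟩ := exists_nat_ge ‖x‖
    refine mem_iUnion.2 ⟨max m1 m2, ⟨⟨?_, ?_⟩, hxS⟩⟩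
    · have hle : (m1 : ℝ) + 1 ≤ (max m1 m2 : ℕ) + 1 := by
        have : (m1 : ℝ) ≤ ((max m1 m2 : ℕ) : ℝ) := Nat.cast_le.2 (le_max_left _ _)
        linarith
      calc (1:ℝ)/((max m1 m2 : ℕ)+1) ≤ 1/((m1:ℝ)+1) :=
            one_div_le_one_div_of_le (by positivity) hle
        _ ≤ infDist x Ωᶜ := hm1.le
    · rw [mem_closedBall, dist_zero_right]
      have : (m2 : ℝ) ≤ ((max m1 m2 : ℕ) : ℝ) := Nat.cast_le.2 (le_max_right _ _)
      linarith
  refine measure_mono_null hcover (measure_iUnion_null fun m => ?_)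
  -- fixed m
  set a : ℝ := 1/(m+1) with hadef
  have ha : 0 < a := by positivity
  set K' : Set E := {x | a/2 ≤ infDist x Ωᶜ} ∩ closedBall 0 (m+2) with hK'
  have hK'cl : IsClosed K' :=
    (isClosed_le continuous_const (continuous_infDist_pt Ωᶜ)).inter Metric.isClosed_closedBall
  have hK'comp : IsCompact K' :=
    (isCompact_closedBall (0:E) (m+2)).of_isClosed_subset hK'cl inter_subset_right
  have hK'sub : K' ⊆ Ω := by
    intro x hx
    by_contra hxΩ
    have h0 : infDist x Ωᶜ = 0 := infDist_zero_of_mem (by simpa using hxΩ)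
    have h1 : a/2 ≤ infDist x Ωᶜ := hx.1
    rw [h0] at h1
    linarith
  obtain ⟨C, hC1, hClow⟩ := hAR K' hK'comp hK'sub
  have hC0 : (0:ℝ) < C := zero_lt_one.trans_le hC1
  set V' : Set E := {x | a/2 < infDist x Ωᶜ} ∩ ball 0 (m+2) with hV'
  have hV'K' : V' ⊆ K' := fun x hx =>
    ⟨le_of_lt (show a/2 < infDist x Ωᶜ from hx.1), ball_subset_closedBall hx.2⟩
  set ρ : Measure E := (μH[(n : ℝ) - 1]).restrict (redBdry Ω A ∩ V') with hρ
  have hρfin : IsFiniteMeasure ρ := by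
    constructor
    rw [hρ, Measure.restrict_apply_univ]
    calc μH[(n : ℝ) - 1] (redBdry Ω A ∩ V')
        ≤ μH[(n : ℝ) - 1] (K' ∩ redBdry Ω A) :=
          measure_mono fun x hx => ⟨hV'K' hx.2, hx.1⟩
      _ = perMeas Ω A K' := (Measure.restrict_apply hK'cl.measurableSet).symm
      _ < ⊤ := hfin K' hK'comp hK'sub
  haveI := hρfin
  have hkey : ∀ x ∈ Km m ∩ S, ∀ r : ℝ, 0 < r → r ≤ min 1 (a/4) →
      ENNReal.ofReal (C⁻¹ * (r/2) ^ ((n:ℝ) - 1)) ≤ ρ (closedBall x r) := by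
    rintro x ⟨hxK, hxS⟩ r hr hrle
    have hr1 : r ≤ 1 := hrle.trans (min_le_left _ _)
    have hra : r ≤ a/4 := hrle.trans (min_le_right _ _)
    obtain ⟨x', hx'B, hx'd⟩ := Metric.mem_closure_iff.1 hxS (r/4) (by linarith)
    have hxinf : a ≤ infDist x Ωᶜ := hxK.1
    have hxnorm : ‖x‖ ≤ m + 1 := by
      have := hxK.2; rwa [mem_closedBall, dist_zero_right] at this
    have hinfx' : a - r/4 ≤ infDist x' Ωᶜ := by
      have h := infDist_le_infDist_add_dist (x := x) (y := x') (s := Ωᶜ)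
      linarith
    have hx'norm : ‖x'‖ ≤ m + 1 + r/4 := by
      have h := norm_le_norm_add_norm_sub' x' x   -- maybe wrong; do via dist
      calc ‖x'‖ = dist x' 0 := (dist_zero_right x').symm
        _ ≤ dist x' x + dist x 0 := dist_triangle _ _ _
        _ ≤ r/4 + (m+1) := by
            rw [dist_comm]
            rw [dist_zero_right]
            exact add_le_add hx'd.le hxnorm
        _ = m + 1 + r/4 := by ring
    have hx'K' : x' ∈ redBdry Ω A ∩ K' := by
      refine ⟨hx'B, ⟨?_, ?_⟩⟩
      · show a/2 ≤ infDist x' Ωᶜ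
        linarith
      · rw [mem_closedBall, dist_zero_right]
        linarith
    have hlow := hClow x' (r/2) hx'K' (by linarith) (by linarith)
    have hsubset : redBdry Ω A ∩ ball x' (r/2) ⊆ closedBall x r ∩ (redBdry Ω A ∩ V') := by
      rintro y ⟨hyB, hyball⟩
      have hyd : dist y x' < r/2 := mem_ball.1 hyball
      refine ⟨?_, hyB, ⟨?_, ?_⟩⟩
      · rw [mem_closedBall]
        calc dist y x ≤ dist y x' + dist x' x := dist_triangle _ _ _
          _ ≤ r/2 + r/4 := by
              rw [dist_comm x' x]
              exact add_le_add hyd.le hx'd.le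
          _ ≤ r := by linarith
      · show a/2 < infDist y Ωᶜ
        have h := infDist_le_infDist_add_dist (x := x') (y := y) (s := Ωᶜ)
        rw [dist_comm] at hyd
        have hra4 : r ≤ a/4 := hra
        linarith
      · rw [mem_ball, dist_zero_right]
        calc ‖y‖ = dist y 0 := (dist_zero_right y).symm
          _ ≤ dist y x' + dist x' 0 := dist_triangle _ _ _
          _ ≤ r/2 + (m + 1 + r/4) := by
              rw [dist_zero_right]
              exact add_le_add hyd.le hx'norm
          _ < m + 2 := by linarith
    calc ENNReal.ofReal (C⁻¹ * (r/2) ^ ((n:ℝ) - 1))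
        ≤ μH[(n : ℝ) - 1] (redBdry Ω A ∩ ball x' (r/2)) := hlow
      _ ≤ μH[(n : ℝ) - 1] (closedBall x r ∩ (redBdry Ω A ∩ V')) := measure_mono hsubset
      _ = ρ (closedBall x r) := (Measure.restrict_apply measurableSet_closedBall).symm
  -- conclude via differentiation of measures
  have hnull : volume {x : E |
      ¬ (Tendsto (fun r => ρ (closedBall x r) / volume (closedBall x r))
          (nhdsWithin 0 (Ioi 0)) (nhds (ρ.rnDeriv volume x)) ∧ ρ.rnDeriv volume x < ⊤)} = 0 :=
    ae_iff.1 ((Besicovitch.ae_tendsto_rnDeriv ρ volume).and (Measure.rnDeriv_lt_top ρ volume))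
  refine measure_mono_null (fun x hx => ?_) hnull
  rw [mem_setOf_eq]
  rintro ⟨hT, hD⟩
  set L := ρ.rnDeriv volume x with hL
  set M : ℝ := L.toReal + 1 with hM
  have hMpos : 0 < M := by
    have := ENNReal.toReal_nonneg (a := L)
    rw [hM]; linarith
  set β : ℝ := C⁻¹ / (2^k * 2^n * cR n) with hβ
  have hβpos : 0 < β := by
    have := cR_pos (n := n)
    rw [hβ]; positivity
  have hL1 : L < L + 1 := ENNReal.lt_add_right hD.ne one_ne_zero
  have hevA : ∀ᶠ r in nhdsWithin (0:ℝ) (Ioi 0),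
      ρ (closedBall x r) / volume (closedBall x r) < L + 1 :=
    hT.eventually (isOpen_Iio.eventually_mem hL1)
  have hevB : ∀ᶠ r in nhdsWithin (0:ℝ) (Ioi 0), r < min (min 1 (a/4)) (β/M) :=
    eventually_nhdsWithin_of_eventually_nhds (eventually_lt_nhds (by positivity))
  obtain ⟨r, ⟨⟨hrA, hrB⟩, hr0'⟩⟩ := ((hevA.and hevB).and self_mem_nhdsWithin).exists
  have hr0 : (0:ℝ) < r := hr0'
  have hrle : r ≤ min 1 (a/4) := (lt_of_lt_of_le hrB (min_le_left _ _)).le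
  have hrM : r < β/M := lt_of_lt_of_le hrB (min_le_right _ _)
  -- lower bound for the ratio
  have hnum := hkey x hx r hr0 hrle
  have hden : volume (closedBall x r) ≤ ENNReal.ofReal ((2*r)^n * cR n) := by
    calc volume (closedBall x r) ≤ volume (ball x (2*r)) :=
          measure_mono (closedBall_subset_ball (by linarith))
      _ = ENNReal.ofReal ((2*r)^n * cR n) := volBall_ofReal x (by linarith)
  have hratio_ge : ENNReal.ofReal (β / r) ≤ ρ (closedBall x r) / volume (closedBall x r) := by
    have hdiv : ENNReal.ofReal (C⁻¹ * (r/2) ^ ((n:ℝ) - 1)) / ENNReal.ofReal ((2*r)^n * cR n)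
        ≤ ρ (closedBall x r) / volume (closedBall x r) := ENNReal.div_le_div hnum hden
    have hident : C⁻¹ * (r/2) ^ ((n:ℝ) - 1) / ((2*r)^n * cR n) = β / r := by
      rw [hexp, Real.rpow_natCast, hβ, hk]
      have hcR := cR_pos (n := n)
      rw [hk] at hcR
      field_simp
      have h2 : (2:ℝ) ^ (k * 2) = 2 ^ k * 2 ^ k := by rw [pow_mul]; ring
      have h3 : ((1:ℝ) / 2) ^ k * 2 ^ k = 1 := by rw [← mul_pow]; norm_num
      linear_combination (r * r ^ k * 2 ^ k * 2) * h3 + (r * r ^ k * (1 / 2) ^ k * 2) * h2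
    rw [← ENNReal.ofReal_div_of_pos (mul_pos (pow_pos (by linarith : (0:ℝ) < 2*r) n) cR_pos), hident] at hdiv
    exact hdiv
  have hMlt : M < β / r := by
    have h1 : r * M < β := (lt_div_iff₀ hMpos).1 hrM
    rw [lt_div_iff₀ hr0]
    linarith
  have hofM : ENNReal.ofReal M = L + 1 := by
    have h1 : (L + 1).toReal = M := by
      rw [ENNReal.toReal_add hD.ne ENNReal.one_ne_top, ENNReal.toReal_one, hM]
    rw [← h1, ENNReal.ofReal_toReal (ENNReal.add_lt_top.2 ⟨hD, ENNReal.one_lt_top⟩).ne]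
  have hlt2 : L + 1 < ENNReal.ofReal (β / r) := by
    rw [← hofM]
    exact (ENNReal.ofReal_lt_ofReal_iff (by positivity)).2 hMlt
  have hfinal : L + 1 < ρ (closedBall x r) / volume (closedBall x r) :=
    lt_of_lt_of_le hlt2 hratio_ge
  exact absurd hrA (not_lt.2 hfinal.le)

lemma not_densTo_zero_of_strong {A : Set E} {x : E}
    (h : ∀ᶠ s in nhdsWithin (0:ℝ) (Ioi 0), (1:ℝ)/2 < dratio A x s) : ¬ densTo A x 0 := by
  intro h0
  have h2 : ∀ᶠ s in nhdsWithin (0:ℝ) (Ioi 0), dratio A x s < 1/2 :=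
    (densTo_iff.1 h0).eventually (isOpen_Iio.eventually_mem (by norm_num))
  obtain ⟨s, hs1, hs2⟩ := (h.and h2).exists
  linarith

end Stmt9Aux

/-- Proposition 5.1: clean open representatives: under the
local Ahlfors regularity of the `∂*W_i`, there exist open sets `W_i^♯`
Lebesgue-equivalent to the `W_i`, with `Ω ∩ ∂W_i^♯ = Ω ∩ cl(∂*W_i)`, which
are pairwise disjoint, and whose union is `Ω \ cl(∂*(W))`. -/
theorem stmt9 {n N : ℕ} (hN : 1 ≤ N) (Ω : Set (EuclideanSpace ℝ (Fin n)))
    (hΩo : IsOpen Ω) (hΩb : Bornology.IsBounded Ω)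
    (W : Fin N → Set (EuclideanSpace ℝ (Fin n))) (hW : FwClass Ω W)
    (hAR : ∀ K : Set (EuclideanSpace ℝ (Fin n)), IsCompact K → K ⊆ Ω →
      ∃ CK : ℝ, 1 ≤ CK ∧ ∀ (i : Fin N) (x : EuclideanSpace ℝ (Fin n)) (r : ℝ),
        x ∈ redBdry Ω (W i) ∩ K → 0 < r → r ≤ 1 →
          ENNReal.ofReal (CK⁻¹ * r ^ ((n : ℝ) - 1))
              ≤ μH[(n : ℝ) - 1] (redBdry Ω (W i) ∩ ball x r) ∧
            μH[(n : ℝ) - 1] (redBdry Ω (W i) ∩ ball x r)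
              ≤ ENNReal.ofReal (CK * r ^ ((n : ℝ) - 1))) :
    ∃ Ws : Fin N → Set (EuclideanSpace ℝ (Fin n)),
      (∀ i, IsOpen (Ws i)) ∧
      (∀ i, volume (W i ∆ Ws i) = 0) ∧
      (∀ i, Ω ∩ frontier (Ws i) = Ω ∩ closure (redBdry Ω (W i))) ∧
      Pairwise (Function.onFun Disjoint Ws) ∧
      Ω \ closure (totBdry Ω W) = ⋃ i, Ws i := by
  classical
  obtain ⟨hWΩ, hWmeas, hWper, hWae⟩ := hW
  set V : Fin N → Set (EuclideanSpace ℝ (Fin n)) :=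
    fun i => Ω \ closure (redBdry Ω (W i)) with hVdef
  have hVopen : ∀ i, IsOpen (V i) := fun i => hΩo.sdiff isClosed_closure
  have hdich : ∀ i, ∀ y ∈ V i, densTo (W i) y 0 ∨ densTo (W i) y 1 := by
    intro i y hy
    by_contra hcon
    push_neg at hcon
    exact hy.2 (subset_closure ⟨hy.1, hcon.1, hcon.2⟩)
  set Ws : Fin N → Set (EuclideanSpace ℝ (Fin n)) :=
    fun i => {x | x ∈ V i ∧ densTo (W i) x 1} with hWsdef
  have hWsball : ∀ i, ∀ x ∈ Ws i,
      ∃ ε > 0, ball x ε ⊆ V i ∧ volume (ball x ε \ W i) = 0 :=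
    fun i x hx => Stmt9Aux.core (hWmeas i) (hVopen i) (hdich i) hx.1 hx.2
  -- (1) openness
  have hWsopen : ∀ i, IsOpen (Ws i) := by
    intro i
    rw [Metric.isOpen_iff]
    intro x hx
    obtain ⟨ε, hε, hsubV, hnull⟩ := hWsball i x hx
    refine ⟨ε, hε, fun y hy => ?_⟩
    have hd : dist y x < ε := mem_ball.1 hy
    have hsmall : ball y (ε - dist y x) ⊆ ball x ε := ball_subset_ball' (by linarith)
    exact ⟨hsubV hy, Stmt9Aux.densTo_one_of_null (by linarith)
      (measure_mono_null (diff_subset_diff_left hsmall) hnull)⟩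
  -- null closures
  have hclnull : ∀ i, volume (Ω ∩ closure (redBdry Ω (W i))) = 0 := by
    intro i
    apply Stmt9Aux.closure_redBdry_null hΩo hΩb (hWper i)
    intro K hK hKsub
    obtain ⟨C, hC1, hCprop⟩ := hAR K hK hKsub
    exact ⟨C, hC1, fun x r hx hr hr1 => (hCprop i x r hx hr hr1).1⟩
  -- a.e. density bundle
  have hae : ∀ i : Fin N, ∀ᵐ x : EuclideanSpace ℝ (Fin n),
      (x ∈ W i → ∀ c : ℝ, c < 1 →
          ∀ᶠ s in nhdsWithin (0:ℝ) (Ioi 0), c < Stmt9Aux.dratio (W i) x s)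
        ∧ (x ∉ W i → ∀ c : ℝ, 0 < c →
          ∀ᶠ s in nhdsWithin (0:ℝ) (Ioi 0), Stmt9Aux.dratio (W i) x s < c) :=
    fun i => Stmt9Aux.ae_density (hWmeas i)
  -- a.e. on subballs of Ω
  have haeball : ∀ x : EuclideanSpace ℝ (Fin n), ∀ ε : ℝ, ball x ε ⊆ Ω →
      ∀ᵐ y : EuclideanSpace ℝ (Fin n), y ∈ ball x ε → ∃! k, y ∈ W k := by
    intro x ε hsub
    have hres2 : ∀ᵐ y ∂(volume.restrict (ball x ε)), ∃! k, y ∈ W k :=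
      hWae.filter_mono (ae_mono (Measure.restrict_mono hsub le_rfl))
    exact (ae_restrict_iff' measurableSet_ball).1 hres2
  -- (2) Lebesgue equivalence
  have hsymm : ∀ i, volume (W i ∆ Ws i) = 0 := by
    intro i
    rw [Set.symmDiff_def]
    apply measure_union_null
    · -- W i \ Ws i
      apply measure_mono_null ?_
        (measure_union_null (ae_iff.1 (hae i)) (hclnull i))
      rintro x ⟨hxW, hxWs⟩
      by_cases hgood : (x ∈ W i → ∀ c : ℝ, c < 1 →
          ∀ᶠ s in nhdsWithin (0:ℝ) (Ioi 0), c < Stmt9Aux.dratio (W i) x s)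
        ∧ (x ∉ W i → ∀ c : ℝ, 0 < c →
          ∀ᶠ s in nhdsWithin (0:ℝ) (Ioi 0), Stmt9Aux.dratio (W i) x s < c)
      · by_cases hcl : x ∈ closure (redBdry Ω (W i))
        · exact Or.inr ⟨hWΩ i hxW, hcl⟩
        · exfalso
          have hxV : x ∈ V i := ⟨hWΩ i hxW, hcl⟩
          rcases hdich i x hxV with h0 | h1
          · exact Stmt9Aux.not_densTo_zero_of_strong
              (hgood.1 hxW (1/2) (by norm_num)) h0
          · exact hxWs ⟨hxV, h1⟩
      · exact Or.inl hgood
    · -- Ws i \ W i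
      have hch : ∀ x : {y // y ∈ Ws i},
          ∃ ε > 0, ball (x : EuclideanSpace ℝ (Fin n)) ε ⊆ V i ∧
            volume (ball (x : EuclideanSpace ℝ (Fin n)) ε \ W i) = 0 :=
        fun x => hWsball i x x.2
      choose ε hεpos hεV hεnull using hch
      obtain ⟨T, hTcount, hTeq⟩ := TopologicalSpace.isOpen_iUnion_countable
        (fun x : {y // y ∈ Ws i} => ball (x : EuclideanSpace ℝ (Fin n)) (ε x))
        (fun _ => isOpen_ball)
      refine measure_mono_null ?_
        ((measure_biUnion_null_iff hTcount).2 fun x _ => hεnull x)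
      rintro y ⟨hyWs, hyW⟩
      have hy : y ∈ ⋃ x ∈ T, ball (x : EuclideanSpace ℝ (Fin n)) (ε x) := by
        rw [hTeq]
        exact mem_iUnion.2 ⟨⟨y, hyWs⟩, mem_ball_self (hεpos ⟨y, hyWs⟩)⟩
      obtain ⟨x, hxT, hyb⟩ := mem_iUnion₂.1 hy
      exact mem_iUnion₂.2 ⟨x, hxT, hyb, hyW⟩
  -- redBdry ⊆ closure Ws
  have hredsub : ∀ i, redBdry Ω (W i) ⊆ closure (Ws i) := by
    intro i y hy
    rw [Metric.mem_closure_iff]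
    intro ε' hε'
    obtain ⟨ε₀, hε₀, hball₀⟩ := Metric.isOpen_iff.1 hΩo y hy.1
    set δ := min ε' ε₀ with hδdef
    have hδpos : 0 < δ := lt_min hε' hε₀
    have hδΩ : ball y δ ⊆ Ω := (ball_subset_ball (min_le_right _ _)).trans hball₀
    have hpos : 0 < volume (W i ∩ ball y δ) := Stmt9Aux.not_densTo_zero_pos hy.2.1 hδpos
    set Bad : Set (EuclideanSpace ℝ (Fin n)) :=
      {x | ¬ ((x ∈ W i → ∀ c : ℝ, c < 1 →
          ∀ᶠ s in nhdsWithin (0:ℝ) (Ioi 0), c < Stmt9Aux.dratio (W i) x s)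
        ∧ (x ∉ W i → ∀ c : ℝ, 0 < c →
          ∀ᶠ s in nhdsWithin (0:ℝ) (Ioi 0), Stmt9Aux.dratio (W i) x s < c))}
        ∪ (Ω ∩ closure (redBdry Ω (W i))) with hBad
    have hBadnull : volume Bad = 0 :=
      measure_union_null (ae_iff.1 (hae i)) (hclnull i)
    have hpos2 : 0 < volume ((W i ∩ ball y δ) \ Bad) := by
      rw [measure_diff_null hBadnull]
      exact hpos
    obtain ⟨z, hz⟩ := nonempty_of_measure_ne_zero hpos2.ne'
    obtain ⟨⟨hzW, hzb⟩, hzBad⟩ := hz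
    have hzΩ : z ∈ Ω := hδΩ hzb
    have hzgood : (z ∈ W i → ∀ c : ℝ, c < 1 →
          ∀ᶠ s in nhdsWithin (0:ℝ) (Ioi 0), c < Stmt9Aux.dratio (W i) z s)
        ∧ (z ∉ W i → ∀ c : ℝ, 0 < c →
          ∀ᶠ s in nhdsWithin (0:ℝ) (Ioi 0), Stmt9Aux.dratio (W i) z s < c) := by
      by_contra hc
      exact hzBad (Or.inl hc)
    have hzcl : z ∉ closure (redBdry Ω (W i)) := fun hc => hzBad (Or.inr ⟨hzΩ, hc⟩)
    have hzV : z ∈ V i := ⟨hzΩ, hzcl⟩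
    have hzWs : z ∈ Ws i := by
      rcases hdich i z hzV with h0 | h1
      · exact absurd h0 (Stmt9Aux.not_densTo_zero_of_strong (hzgood.1 hzW (1/2) (by norm_num)))
      · exact ⟨hzV, h1⟩
    refine ⟨z, hzWs, ?_⟩
    have := mem_ball.1 hzb
    rw [dist_comm]
    exact lt_of_lt_of_le this (min_le_left _ _)
  -- (3) frontier identity
  have hfrontier : ∀ i, Ω ∩ frontier (Ws i) = Ω ∩ closure (redBdry Ω (W i)) := by
    intro i
    rw [(hWsopen i).frontier_eq]
    ext x
    simp only [mem_inter_iff, mem_diff]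
    constructor
    · rintro ⟨hxΩ, hxcl, hxWs⟩
      refine ⟨hxΩ, ?_⟩
      by_contra hxno
      have hxV : x ∈ V i := ⟨hxΩ, hxno⟩
      rcases hdich i x hxV with h0 | h1
      · obtain ⟨ε, hε, hsubV, hnull⟩ :=
          Stmt9Aux.core_zero (hWmeas i) (hVopen i) (hdich i) hxV h0
        have hdisj : ∀ z ∈ ball x ε, z ∉ Ws i := by
          intro z hz hzWs
          obtain ⟨ε₂, hε₂, hsub₂, hnull₂⟩ := hWsball i z hzWs
          set s := min ε₂ (ε - dist z x) with hsdef
          have hzd := mem_ball.1 hz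
          have hspos : 0 < s := lt_min hε₂ (by linarith)
          have hsub3 : ball z s ⊆ ball x ε :=
            ball_subset_ball' (by
              have := min_le_right ε₂ (ε - dist z x)
              have h2 : s ≤ ε - dist z x := this
              linarith)
          have hv1 : volume (W i ∩ ball z s) = 0 :=
            measure_mono_null (inter_subset_inter_right _ hsub3) hnull
          have hv2 : volume (ball z s \ W i) = 0 :=
            measure_mono_null (diff_subset_diff_left (ball_subset_ball (min_le_left _ _))) hnull₂
          have hsplit := measure_inter_add_diff (μ := volume) (ball z s) (hWmeas i)
          rw [inter_comm] at hv1
          rw [hv1, hv2, add_zero] at hsplit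
          exact absurd hsplit.symm (Stmt9Aux.volBall_pos z hspos).ne'
        have hnotcl : x ∉ closure (Ws i) := by
          rw [Metric.mem_closure_iff]
          push_neg
          exact ⟨ε, hε, fun b hb => le_of_not_gt fun hlt => hdisj b (mem_ball'.2 hlt) hb⟩
        exact hnotcl hxcl
      · exact hxWs ⟨hxV, h1⟩
    · rintro ⟨hxΩ, hxcl⟩
      refine ⟨hxΩ, ?_, ?_⟩
      · have hsub : closure (redBdry Ω (W i)) ⊆ closure (Ws i) := by
          rw [← closure_closure (s := Ws i)]
          exact closure_mono (hredsub i)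
        exact hsub hxcl
      · intro hxWs
        exact hxWs.1.2 hxcl
  -- (4) pairwise disjoint
  have hdisjoint : Pairwise (Function.onFun Disjoint Ws) := by
    intro i j hij
    rw [Function.onFun, Set.disjoint_left]
    intro x hxi hxj
    obtain ⟨εi, hεi, hVi, hni⟩ := hWsball i x hxi
    obtain ⟨εj, hεj, hVj, hnj⟩ := hWsball j x hxj
    set ε := min εi εj with hεdef
    have hε : 0 < ε := lt_min hεi hεj
    have hballΩ : ball x ε ⊆ Ω := fun y hy =>
      (hVi ((ball_subset_ball (min_le_left _ _)) hy)).1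
    have h1 : ∀ᵐ y : EuclideanSpace ℝ (Fin n), y ∈ ball x ε → y ∈ W i := by
      refine ae_iff.2 (measure_mono_null ?_ hni)
      intro y hy
      rw [mem_setOf_eq] at hy
      push_neg at hy
      exact ⟨ball_subset_ball (min_le_left _ _) hy.1, hy.2⟩
    have h2 : ∀ᵐ y : EuclideanSpace ℝ (Fin n), y ∈ ball x ε → y ∈ W j := by
      refine ae_iff.2 (measure_mono_null ?_ hnj)
      intro y hy
      rw [mem_setOf_eq] at hy
      push_neg at hy
      exact ⟨ball_subset_ball (min_le_right _ _) hy.1, hy.2⟩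
    have h3 := haeball x ε hballΩ
    obtain ⟨y, hyball, ⟨hy1, hy2⟩, hy3⟩ :=
      Stmt9Aux.exists_point ((h1.and h2).and h3) (Stmt9Aux.volBall_pos x hε)
    obtain ⟨k, hk, huniq⟩ := hy3 hyball
    exact hij ((huniq i (hy1 hyball)).trans (huniq j (hy2 hyball)).symm)
  -- (5) union identity
  have hunion : Ω \ closure (totBdry Ω W) = ⋃ i, Ws i := by
    apply Subset.antisymm
    · rintro x ⟨hxΩ, hxcl⟩
      have hxV : ∀ i, x ∈ V i := by
        intro i
        refine ⟨hxΩ, fun hc => hxcl ?_⟩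
        exact closure_mono (subset_iUnion (fun j => redBdry Ω (W j)) i) hc
      by_contra hxu
      rw [mem_iUnion] at hxu
      push_neg at hxu
      have hd0 : ∀ i, densTo (W i) x 0 := by
        intro i
        rcases hdich i x (hxV i) with h | h
        · exact h
        · exact absurd (⟨hxV i, h⟩ : x ∈ Ws i) (hxu i)
      obtain ⟨ε₀, hε₀, hball₀⟩ := Metric.isOpen_iff.1 hΩo x hxΩ
      have hsum : Tendsto (fun s => ∑ i, Stmt9Aux.dratio (W i) x s)
          (nhdsWithin (0:ℝ) (Ioi 0)) (nhds 0) := by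
        have h := tendsto_finset_sum Finset.univ
          (fun (i : Fin N) (_ : i ∈ Finset.univ) => (Stmt9Aux.densTo_iff.1 (hd0 i)))
        simpa using h
      have hev : ∀ᶠ s in nhdsWithin (0:ℝ) (Ioi 0),
          (∑ i, Stmt9Aux.dratio (W i) x s) < 1 :=
        hsum.eventually (isOpen_Iio.eventually_mem (by norm_num))
      have hevsmall : ∀ᶠ s in nhdsWithin (0:ℝ) (Ioi 0), s < ε₀ :=
        eventually_nhdsWithin_of_eventually_nhds (eventually_lt_nhds hε₀)
      obtain ⟨s, ⟨⟨hs1, hs2⟩, hs0'⟩⟩ := ((hev.and hevsmall).and self_mem_nhdsWithin).exists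
      have hs0 : (0:ℝ) < s := hs0'
      have hballs : ball x s ⊆ Ω := (ball_subset_ball hs2.le).trans hball₀
      have hcovae := haeball x s hballs
      have hle : volume (ball x s) ≤ ∑ i, volume (W i ∩ ball x s) := by
        have hsubnull : volume (ball x s \ ⋃ i, (W i ∩ ball x s)) = 0 := by
          apply measure_mono_null ?_ (ae_iff.1 hcovae)
          rintro y ⟨hy1, hy2⟩
          rw [mem_setOf_eq]
          push_neg
          refine ⟨hy1, fun hex => ?_⟩
          obtain ⟨k, hk, -⟩ := hex
          exact hy2 (mem_iUnion.2 ⟨k, hk, hy1⟩)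
        calc volume (ball x s)
            ≤ volume ((⋃ i, (W i ∩ ball x s)) ∪ (ball x s \ ⋃ i, (W i ∩ ball x s))) := by
              apply measure_mono
              intro y hy
              by_cases hyu : y ∈ ⋃ i, (W i ∩ ball x s)
              · exact Or.inl hyu
              · exact Or.inr ⟨hy, hyu⟩
          _ ≤ volume (⋃ i, (W i ∩ ball x s)) + volume (ball x s \ ⋃ i, (W i ∩ ball x s)) :=
              measure_union_le _ _
          _ = volume (⋃ i, (W i ∩ ball x s)) := by rw [hsubnull, add_zero]
          _ ≤ ∑ i, volume (W i ∩ ball x s) := measure_iUnion_fintype_le volume _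
      have hne : ∀ i : Fin N, volume (W i ∩ ball x s) ≠ ⊤ :=
        fun i => ((measure_mono inter_subset_right).trans_lt measure_ball_lt_top).ne
      have hreal : (volume (ball x s)).toReal ≤ ∑ i, (volume (W i ∩ ball x s)).toReal := by
        calc (volume (ball x s)).toReal ≤ (∑ i, volume (W i ∩ ball x s)).toReal :=
              ENNReal.toReal_mono (by
                rw [← lt_top_iff_ne_top, ENNReal.sum_lt_top]
                exact fun i _ => (hne i).lt_top) hle
          _ = ∑ i, (volume (W i ∩ ball x s)).toReal :=
              ENNReal.toReal_sum (fun i _ => hne i)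
      have hV := Stmt9Aux.volBall_toReal_pos x hs0
      have heq : ∀ i : Fin N, (volume (W i ∩ ball x s)).toReal
          = Stmt9Aux.dratio (W i) x s * (volume (ball x s)).toReal := by
        intro i
        rw [Stmt9Aux.dratio, div_mul_cancel₀ _ hV.ne']
      rw [Finset.sum_congr rfl (fun i _ => heq i), ← Finset.sum_mul] at hreal
      nlinarith
    · rw [iUnion_subset_iff]
      intro i x hxi
      obtain ⟨ε, hε, hVsub, hnull⟩ := hWsball i x hxi
      have hballΩ : ball x ε ⊆ Ω := fun y hy => (hVsub hy).1
      have h1 : ∀ᵐ y : EuclideanSpace ℝ (Fin n), y ∈ ball x ε → y ∈ W i := by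
        refine ae_iff.2 (measure_mono_null ?_ hnull)
        intro y hy
        rw [mem_setOf_eq] at hy
        push_neg at hy
        exact ⟨hy.1, hy.2⟩
      have h3 := haeball x ε hballΩ
      have hWj : ∀ j, j ≠ i → volume (W j ∩ ball x ε) = 0 := by
        intro j hj
        apply measure_mono_null ?_ (ae_iff.1 (h1.and h3))
        rintro y ⟨hyj, hyb⟩
        rw [mem_setOf_eq]
        intro hcon
        obtain ⟨k, hk, huniq⟩ := hcon.2 hyb
        exact hj ((huniq j hyj).trans (huniq i (hcon.1 hyb)).symm)
      have hnotb : ∀ z ∈ ball x ε, ∀ j, z ∉ redBdry Ω (W j) := by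
        intro z hz j hzB
        have hzd := mem_ball.1 hz
        set s := ε - dist z x with hsdef
        have hspos : 0 < s := by rw [hsdef]; linarith
        have hsub2 : ball z s ⊆ ball x ε := ball_subset_ball' (by rw [hsdef]; linarith)
        by_cases hji : j = i
        · subst hji
          exact hzB.2.2 (Stmt9Aux.densTo_one_of_null hspos
            (measure_mono_null (diff_subset_diff_left hsub2) hnull))
        · exact hzB.2.1 (Stmt9Aux.densTo_zero_of_null hspos
            (measure_mono_null (inter_subset_inter_right _ hsub2) (hWj j hji)))
      refine ⟨(hVsub (mem_ball_self hε)).1, ?_⟩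
      intro hxcl
      obtain ⟨b, hbT, hbd⟩ := Metric.mem_closure_iff.1 hxcl ε hε
      rw [totBdry, mem_iUnion] at hbT
      obtain ⟨j, hbj⟩ := hbT
      exact hnotb b (mem_ball'.2 hbd) j hbj
  exact ⟨Ws, hWsopen, hsymm, hfrontier, hdisjoint, hunion⟩

end
end
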